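/- arXiv:1708.03476 — 4 statements merged into one kernel-verified Lean document; each statement's English description precedes it below -/
import Mathlib

section
/- Let G be an infinite group generated by S, let H ≤ G with 1 < [G : H] < ∞, and suppose [x₁,…,xₙ] is a Hamilton cycle of the Schreier graph of left cosets of H and a := x₁⋯xₙ generates H (so H ≅ ℤ). Then every element of G has a unique representation a^i · x₁⋯x_j with i ∈ ℤ and 0 ≤ j < n; in particular the Cayley graph Γ(G,S) contains a Hamilton double ray. -/
/-- Factor group lemma via Schreier graphs, infinite case: if `G` is infinite,
`1 < [G : H] < ∞`, the partial products of `x₁,…,xₙ ∈ S` visit every coset of `H`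
exactly once (a Hamilton cycle of the Schreier graph) and `a = x₁⋯xₙ` generates `H`,
then every element of `G` is uniquely of the form `aⁱ · x₁⋯x_j` with `i ∈ ℤ`,
`0 ≤ j < n`; in particular `Γ(G,S)` contains a Hamilton double ray (an enumeration
of `G` by `ℤ` with consecutive steps in `S`). -/
theorem stmt_11 {G : Type*} [Group G] [Infinite G] (S : Set G) (hSfin : S.Finite)
    (hsym : ∀ s ∈ S, s⁻¹ ∈ S) (hgen : Subgroup.closure S = ⊤)
    (H : Subgroup G) (hind : 1 < H.index) (hfin : H.index ≠ 0)
    (xs : List G) (hxs : ∀ x ∈ xs, x ∈ S)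
    (a : G) (ha : a = xs.prod) (hgenH : Subgroup.zpowers a = H)
    (hham : ∀ g : G, ∃! j : Fin xs.length, g * ((xs.take j).prod)⁻¹ ∈ H) :
    (∀ g : G, ∃! p : ℤ × Fin xs.length,
        g = a ^ p.1 * (xs.take p.2).prod) ∧
      ∃ f : ℤ ≃ G, ∀ i : ℤ, (f i)⁻¹ * f (i + 1) ∈ S := by
  classical
  obtain ⟨j0, -, -⟩ := hham 1
  have hnpos : 0 < xs.length := j0.pos
  have hHcard : Nat.card H = 0 := by
    have h1 : Nat.card H * H.index = Nat.card G := H.card_mul_index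
    have h2 : Nat.card G = 0 := Nat.card_eq_zero_of_infinite
    rcases Nat.mul_eq_zero.mp (h1.trans h2) with h | h
    · exact h
    · exact absurd h hfin
  have hord : ¬ IsOfFinOrder a := by
    rw [← orderOf_eq_zero_iff, ← Nat.card_zpowers, hgenH]
    exact hHcard
  have hinj : Function.Injective fun i : ℤ => a ^ i :=
    injective_zpow_iff_not_isOfFinOrder.mpr hord
  have huniq : ∀ g : G, ∃! p : ℤ × Fin xs.length,
      g = a ^ p.1 * (xs.take p.2).prod := by
    intro g
    obtain ⟨j, hj, hjuniq⟩ := hham g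
    have hj' : g * ((xs.take j).prod)⁻¹ ∈ Subgroup.zpowers a := hgenH ▸ hj
    obtain ⟨i, hi0⟩ := hj'
    have hi : a ^ i = g * ((xs.take j).prod)⁻¹ := hi0
    refine ⟨(i, j), ?_, ?_⟩
    · exact mul_inv_eq_iff_eq_mul.mp hi.symm
    · rintro ⟨i', j'⟩ h'
      have hm : g * ((xs.take j').prod)⁻¹ ∈ H := by
        rw [h', mul_inv_cancel_right, ← hgenH]
        exact Subgroup.zpow_mem _ (Subgroup.mem_zpowers a) i'
      have hjj : j' = j := hjuniq _ hm
      subst hjj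
      have hii : a ^ i' = a ^ i := by
        rw [hi, h', mul_inv_cancel_right]
      exact Prod.ext (hinj hii) rfl
  refine ⟨huniq, ?_⟩
  set n : ℤ := (xs.length : ℤ) with hn
  have hn0 : 0 < n := by rw [hn]; exact_mod_cast hnpos
  have hnz : n ≠ 0 := hn0.ne'
  have hmodlt : ∀ k : ℤ, (k % n).toNat < xs.length := by
    intro k
    have h1 : k % n < n := Int.emod_lt_of_pos k hn0
    have h2 : 0 ≤ k % n := Int.emod_nonneg k hnz
    omega
  set f : ℤ → G := fun k => a ^ (k / n) * (xs.take (k % n).toNat).prod with hf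
  set rep : ℤ → ℤ × Fin xs.length :=
    fun k => (k / n, ⟨(k % n).toNat, hmodlt k⟩) with hrep
  have hfr : ∀ k : ℤ, f k = a ^ (rep k).1 * (xs.take ((rep k).2 : ℕ)).prod :=
    fun k => rfl
  have hstep : ∀ k : ℤ, f (k + 1) = f k * xs.get ⟨(k % n).toNat, hmodlt k⟩ := by
    intro k
    have h1 : k % n < n := Int.emod_lt_of_pos k hn0
    have h2 : 0 ≤ k % n := Int.emod_nonneg k hnz
    have e : k % n + n * (k / n) = k := Int.emod_add_mul_ediv k n
    by_cases hc : k % n + 1 = n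
    · have hk1 : k + 1 = n * (k / n + 1) := by
        have hx : n * (k / n + 1) = n * (k / n) + n := by ring
        omega
      have hdiv : (k + 1) / n = k / n + 1 := by
        rw [hk1, Int.mul_ediv_cancel_left _ hnz]
      have hmod : (k + 1) % n = 0 := by rw [hk1]; exact Int.mul_emod_right _ _
      have htake : xs.take ((k % n).toNat + 1) = xs := by
        apply List.take_of_length_le; omega
      have hprod : (xs.take ((k % n).toNat + 1)).prod = a := by rw [htake, ha]
      rw [hf]
      simp only [hdiv, hmod, Int.toNat_zero, List.take_zero, List.prod_nil, mul_one]
      rw [zpow_add_one, ← hprod, List.prod_take_succ _ _ (hmodlt k), ← mul_assoc]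
      rfl
    · have hk1 : k + 1 = (k % n + 1) + n * (k / n) := by omega
      have hdiv : (k + 1) / n = k / n := by
        rw [hk1, Int.add_mul_ediv_left _ _ hnz, Int.ediv_eq_zero_of_lt (by omega) (by omega),
          zero_add]
      have hmod : (k + 1) % n = k % n + 1 := by
        rw [hk1, Int.add_mul_emod_self_left, Int.emod_eq_of_lt (by omega) (by omega)]
      rw [hf]
      simp only [hdiv, hmod]
      rw [show (k % n + 1).toNat = (k % n).toNat + 1 by omega,
        List.prod_take_succ _ _ (hmodlt k), ← mul_assoc]
      rfl
  have hbij : Function.Bijective f := by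
    constructor
    · intro k k' hkk
      have h : rep k = rep k' :=
        (huniq (f k)).unique (hfr k) (hkk.trans (hfr k'))
      have h1 : k / n = k' / n := congrArg Prod.fst h
      have h2 : ((k % n).toNat : ℕ) = ((k' % n).toNat : ℕ) :=
        congrArg (fun p : ℤ × Fin xs.length => (p.2 : ℕ)) h
      have e1 : k % n + n * (k / n) = k := Int.emod_add_mul_ediv k n
      have e2 : k' % n + n * (k' / n) = k' := Int.emod_add_mul_ediv k' n
      have h1' : 0 ≤ k % n := Int.emod_nonneg k hnz
      have h2' : 0 ≤ k' % n := Int.emod_nonneg k' hnz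
      have h4 : k % n = k' % n := by omega
      calc k = k % n + n * (k / n) := e1.symm
        _ = k' % n + n * (k' / n) := by rw [h4, h1]
        _ = k' := e2
    · intro g
      obtain ⟨⟨i, j⟩, hp, -⟩ := huniq g
      refine ⟨(j : ℤ) + n * i, ?_⟩
      have hjlt : (j : ℤ) < n := by rw [hn]; exact_mod_cast j.isLt
      have hjnn : (0 : ℤ) ≤ (j : ℤ) := Int.ofNat_nonneg _
      have hdiv : ((j : ℤ) + n * i) / n = i := by
        rw [Int.add_mul_ediv_left _ _ hnz,
          Int.ediv_eq_zero_of_lt hjnn hjlt, zero_add]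
      have hmod : ((j : ℤ) + n * i) % n = (j : ℤ) := by
        rw [Int.add_mul_emod_self_left, Int.emod_eq_of_lt hjnn hjlt]
      rw [hf]
      simp only [hdiv, hmod, Int.toNat_natCast]
      exact hp.symm
  refine ⟨Equiv.ofBijective f hbij, ?_⟩
  intro i
  simp only [Equiv.ofBijective_apply]
  rw [hstep i, inv_mul_cancel_left]
  exact hxs _ (List.get_mem _ _)
end

section
/- For the free group F_r of rank r with generating set S = T ∪ T⁻¹ where T = {s₁,…,s_r, s₁²,…,s_r², s₁s₂, s₁s₃, …, s₁s_r} (standard generators s₁,…,s_r), the Cayley graph Γ(F_r, S) is 2-connected. -/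
/-- The Cayley graph of a group `G` with respect to a (symmetric) set `S`. -/
def cayleyGraph (G : Type*) [Group G] (S : Set G) : SimpleGraph G where
  Adj x y := x ≠ y ∧ (x⁻¹ * y ∈ S ∨ y⁻¹ * x ∈ S)
  symm := ⟨fun _ _ h => ⟨h.1.symm, h.2.symm⟩⟩
  loopless := ⟨fun _ h => h.1 rfl⟩

/-- The set `T = {s₁,…,s_r, s₁²,…,s_r², s₁s₂,…,s₁s_r}` of words in the free group
`F_r`, where `s₁,…,s_r` are the standard free generators (indexed by `Fin r`, with
`s₁` corresponding to the index `⟨0, hr⟩`). -/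
def T (r : ℕ) (hr : 1 ≤ r) : Set (FreeGroup (Fin r)) :=
  Set.range FreeGroup.of ∪ Set.range (fun i => FreeGroup.of i * FreeGroup.of i) ∪
    { w | ∃ i : Fin r, i ≠ ⟨0, hr⟩ ∧ w = FreeGroup.of ⟨0, hr⟩ * FreeGroup.of i }

namespace Stmt15Aux

open FreeGroup

/-- Dropping the last letter of a reduced word yields a reduced word. -/
lemma reduce_dropLast {α : Type*} [DecidableEq α] {l : List (α × Bool)}
    (h : reduce l = l) : reduce l.dropLast = l.dropLast := by
  rcases eq_or_ne l [] with rfl | hl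
  · simp
  obtain ⟨l', a, rfl⟩ : ∃ l' a, l = l' ++ [a] :=
    ⟨l.dropLast, l.getLast hl, (List.dropLast_append_getLast hl).symm⟩
  rw [List.dropLast_concat]
  by_contra hne
  have hred : Red l' (reduce l') := reduce.red
  rcases Relation.ReflTransGen.cases_head hred with heq | ⟨b, hstep, htail⟩
  · exact hne heq.symm
  · have hlen1 : b.length + 2 = l'.length := hstep.length
    have hlen2 : (reduce l').length ≤ b.length := Red.length_le htail
    have hredl : Red (l' ++ [a]) (reduce l' ++ [a]) :=
      Red.append_append reduce.red Relation.ReflTransGen.refl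
    have h1 : reduce (l' ++ [a]) = reduce (reduce l' ++ [a]) := reduce.eq_of_red hredl
    have h2 : (reduce (reduce l' ++ [a])).length ≤ (reduce l' ++ [a]).length :=
      Red.length_le reduce.red
    rw [← h1, h] at h2
    simp only [List.length_append, List.length_singleton] at h2
    omega

variable {r : ℕ}

/-- The first generator index. -/
abbrev e0 (hr : 1 ≤ r) : Fin r := ⟨0, hr⟩

variable (hr : 1 ≤ r)

local notation "F" => FreeGroup (Fin r)
local notation "S" => T r hr ∪ (T r hr)⁻¹
local notation "G" => cayleyGraph (FreeGroup (Fin r)) (T r hr ∪ (T r hr)⁻¹)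

lemma of_mem (i : Fin r) : of i ∈ S := Or.inl (Or.inl (Or.inl ⟨i, rfl⟩))

lemma inv_of_mem (i : Fin r) : (of i)⁻¹ ∈ S := by
  refine Or.inr ?_
  simp only [Set.mem_inv, inv_inv]
  exact Or.inl (Or.inl ⟨i, rfl⟩)

lemma sq_mem (i : Fin r) : of i * of i ∈ S := Or.inl (Or.inl (Or.inr ⟨i, rfl⟩))

lemma pair_mem (i : Fin r) (hi : i ≠ e0 hr) : of (e0 hr) * of i ∈ S :=
  Or.inl (Or.inr ⟨i, hi, rfl⟩)

/-- `mk [(i, false)] = (of i)⁻¹`. -/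
lemma mk_single_false (i : Fin r) : (mk [(i, false)] : F) = (of i)⁻¹ := by
  show (mk [(i, false)] : F) = (mk [(i, true)])⁻¹
  rw [FreeGroup.inv_mk]
  simp [invRev]

lemma adj_mul (x g : F) (hg : g ∈ S) (hg1 : g ≠ 1) :
    (cayleyGraph (FreeGroup (Fin r)) (T r hr ∪ (T r hr)⁻¹)).Adj x (x * g) := by
  refine ⟨fun h => hg1 (left_eq_mul.mp h), Or.inl ?_⟩
  rwa [inv_mul_cancel_left]

lemma of_ne_inv_of (i j : Fin r) : (of i : F) ≠ (of j)⁻¹ := by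
  intro h
  have := congrArg toWord h
  rw [toWord_of, toWord_inv, toWord_of] at this
  simp [invRev] at this

/-- Reachability to `of e₀` inside the punctured graph (identity removed). -/
lemma gen_reach (i : Fin r) :
    (SimpleGraph.induce {w | w ≠ (1 : F)}
      (cayleyGraph (FreeGroup (Fin r)) (T r hr ∪ (T r hr)⁻¹))).Reachable
      ⟨of i, of_ne_one i⟩ ⟨of (e0 hr), of_ne_one (e0 hr)⟩ := by
  by_cases hi : i = e0 hr
  · subst hi; rfl
  · have a1 : (cayleyGraph (FreeGroup (Fin r)) (T r hr ∪ (T r hr)⁻¹)).Adj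
        (of i) ((of (e0 hr))⁻¹) :=
      ⟨of_ne_inv_of i (e0 hr), Or.inr (by rw [inv_inv]; exact pair_mem hr i hi)⟩
    have a2 : (cayleyGraph (FreeGroup (Fin r)) (T r hr ∪ (T r hr)⁻¹)).Adj
        ((of (e0 hr))⁻¹) (of (e0 hr)) :=
      ⟨fun h => of_ne_inv_of (e0 hr) (e0 hr) h.symm,
        Or.inl (by rw [inv_inv]; exact sq_mem hr (e0 hr))⟩
    have r1 : (SimpleGraph.induce {w | w ≠ (1 : F)}
        (cayleyGraph (FreeGroup (Fin r)) (T r hr ∪ (T r hr)⁻¹))).Adj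
        ⟨of i, of_ne_one i⟩ ⟨(of (e0 hr))⁻¹, inv_ne_one.mpr (of_ne_one (e0 hr))⟩ := a1
    have r2 : (SimpleGraph.induce {w | w ≠ (1 : F)}
        (cayleyGraph (FreeGroup (Fin r)) (T r hr ∪ (T r hr)⁻¹))).Adj
        ⟨(of (e0 hr))⁻¹, inv_ne_one.mpr (of_ne_one (e0 hr))⟩
        ⟨of (e0 hr), of_ne_one (e0 hr)⟩ := a2
    exact r1.reachable.trans r2.reachable

/-- Every nonidentity element reaches `of e₀` in the punctured graph. -/
lemma reach_aux : ∀ n (w : F) (hw : w ≠ 1), w.toWord.length = n →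
    (SimpleGraph.induce {w | w ≠ (1 : F)}
      (cayleyGraph (FreeGroup (Fin r)) (T r hr ∪ (T r hr)⁻¹))).Reachable
      ⟨w, hw⟩ ⟨of (e0 hr), of_ne_one (e0 hr)⟩ := by
  intro n
  induction n using Nat.strong_induction_on with
  | _ n ih =>
    intro w hw hn
    have hl : w.toWord ≠ [] := fun h => hw (toWord_eq_nil_iff.mp h)
    rcases Nat.lt_or_ge n 2 with hn2 | hn2
    · -- length 1 : w is a single letter
      interval_cases n
      · exact absurd (List.length_eq_zero_iff.mp hn) hl
      · obtain ⟨a, ha⟩ := List.length_eq_one_iff.mp hn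
        obtain ⟨i, b⟩ := a
        have hw' : w = mk [(i, b)] := by rw [← ha, mk_toWord]
        cases b
        · -- w = (of i)⁻¹
          rw [mk_single_false] at hw'
          subst hw'
          have a1 : (cayleyGraph (FreeGroup (Fin r)) (T r hr ∪ (T r hr)⁻¹)).Adj
              ((of i)⁻¹) (of i) :=
            ⟨fun h => of_ne_inv_of i i h.symm, Or.inl (by rw [inv_inv]; exact sq_mem hr i)⟩
          have r1 : (SimpleGraph.induce {w | w ≠ (1 : F)}
              (cayleyGraph (FreeGroup (Fin r)) (T r hr ∪ (T r hr)⁻¹))).Adj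
              ⟨(of i)⁻¹, hw⟩ ⟨of i, of_ne_one i⟩ := a1
          exact r1.reachable.trans (gen_reach hr i)
        · -- w = of i
          have : w = of i := hw'
          subst this
          exact gen_reach hr i
    · -- length ≥ 2 : strip the last letter
      have hWred : reduce w.toWord = w.toWord := reduce_toWord w
      have hred' : reduce w.toWord.dropLast = w.toWord.dropLast := reduce_dropLast hWred
      set a := w.toWord.getLast hl with hadef
      set w' := (mk w.toWord.dropLast : F) with hw'def
      have htw' : w'.toWord = w.toWord.dropLast := by rw [hw'def, toWord_mk, hred']
      have hlen : w.toWord.dropLast.length = n - 1 := by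
        rw [List.length_dropLast, hn]
      have hw'1 : w' ≠ 1 := by
        intro h
        have h2 := toWord_eq_nil_iff.mpr h
        rw [htw'] at h2
        have := congrArg List.length h2
        rw [hlen] at this
        simp at this
        omega
      have hmul : w' * mk [a] = w := by
        rw [hw'def, FreeGroup.mul_mk, List.dropLast_append_getLast hl, mk_toWord]
      have hmem : (mk [a] : F) ∈ S := by
        obtain ⟨i, b⟩ := a
        cases b
        · rw [mk_single_false]; exact inv_of_mem hr i
        · exact of_mem hr i
      have hne1 : (mk [a] : F) ≠ 1 := by
        intro h
        have h2 := toWord_eq_nil_iff.mpr h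
        rw [toWord_mk, reduce_singleton] at h2
        exact absurd h2 (by simp)
      have hadj : (cayleyGraph (FreeGroup (Fin r)) (T r hr ∪ (T r hr)⁻¹)).Adj w' w := by
        rw [← hmul]; exact adj_mul hr w' (mk [a]) hmem hne1
      have r1 : (SimpleGraph.induce {w | w ≠ (1 : F)}
          (cayleyGraph (FreeGroup (Fin r)) (T r hr ∪ (T r hr)⁻¹))).Adj
          ⟨w', hw'1⟩ ⟨w, hw⟩ := hadj
      have hrec := ih (n - 1) (by omega) w' hw'1 (by rw [htw', hlen])
      exact r1.symm.reachable.trans hrec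

lemma punctured_connected_one :
    (SimpleGraph.induce {w | w ≠ (1 : F)}
      (cayleyGraph (FreeGroup (Fin r)) (T r hr ∪ (T r hr)⁻¹))).Connected := by
  rw [SimpleGraph.connected_iff_exists_forall_reachable]
  refine ⟨⟨of (e0 hr), of_ne_one (e0 hr)⟩, fun b => ?_⟩
  exact (reach_aux hr b.1.toWord.length b.1 b.2 rfl).symm

/-- Left translation by `v` as an isomorphism between punctured Cayley graphs. -/
def shift (v : F) :
    (SimpleGraph.induce {w | w ≠ (1 : F)}
      (cayleyGraph (FreeGroup (Fin r)) (T r hr ∪ (T r hr)⁻¹))) ≃g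
    (SimpleGraph.induce {w | w ≠ v}
      (cayleyGraph (FreeGroup (Fin r)) (T r hr ∪ (T r hr)⁻¹))) where
  toFun x := ⟨v * x.1, by
    have hx := x.2
    simp only [Set.mem_setOf_eq] at hx ⊢
    intro h
    exact hx (mul_left_cancel (by rw [h, mul_one]))⟩
  invFun y := ⟨v⁻¹ * y.1, by
    have hy := y.2
    simp only [Set.mem_setOf_eq] at hy ⊢
    intro h
    exact hy (inv_mul_eq_one.mp h).symm⟩
  left_inv x := by ext; simp
  right_inv y := by ext; simp
  map_rel_iff' := by
    intro x y
    show (cayleyGraph _ _).Adj (v * x.1) (v * y.1) ↔ (cayleyGraph _ _).Adj x.1 y.1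
    unfold cayleyGraph
    simp only [ne_eq, mul_right_inj, mul_inv_rev]
    constructor
    · rintro ⟨h1, h2⟩
      refine ⟨h1, ?_⟩
      rcases h2 with h2 | h2
      · left; rwa [mul_assoc, inv_mul_cancel_left] at h2
      · right; rwa [mul_assoc, inv_mul_cancel_left] at h2
    · rintro ⟨h1, h2⟩
      refine ⟨h1, ?_⟩
      rcases h2 with h2 | h2
      · left; rwa [mul_assoc, inv_mul_cancel_left]
      · right; rwa [mul_assoc, inv_mul_cancel_left]

lemma reach_one (w : F) :
    (cayleyGraph (FreeGroup (Fin r)) (T r hr ∪ (T r hr)⁻¹)).Reachable w 1 := by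
  by_cases hw : w = 1
  · exact hw ▸ SimpleGraph.Reachable.refl _
  · have h1 := reach_aux hr w.toWord.length w hw rfl
    have h2 := h1.map (SimpleGraph.Embedding.induce {w | w ≠ (1 : F)}).toHom
    have h3 : (cayleyGraph (FreeGroup (Fin r)) (T r hr ∪ (T r hr)⁻¹)).Adj (of (e0 hr)) 1 :=
      ⟨of_ne_one (e0 hr), Or.inl (by rw [mul_one]; exact inv_of_mem hr (e0 hr))⟩
    exact h2.trans h3.reachable

end Stmt15Aux

/-- For the free group `F_r` (`r ≥ 1`) with generating set `S = T ∪ T⁻¹`, the Cayley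
graph `Γ(F_r, S)` is 2-connected: it is connected and deleting any single vertex
leaves it connected. -/
theorem stmt_15 (r : ℕ) (hr : 1 ≤ r) :
    (cayleyGraph (FreeGroup (Fin r)) (T r hr ∪ (T r hr)⁻¹)).Connected ∧
      ∀ v : FreeGroup (Fin r),
        (SimpleGraph.induce {w | w ≠ v}
          (cayleyGraph (FreeGroup (Fin r)) (T r hr ∪ (T r hr)⁻¹))).Connected := by
  constructor
  · rw [SimpleGraph.connected_iff_exists_forall_reachable]
    exact ⟨1, fun w => (Stmt15Aux.reach_one hr w).symm⟩
  · intro v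
    exact (Stmt15Aux.shift hr v).connected_iff.mp (Stmt15Aux.punctured_connected_one hr)
end

section
/- Let G be a finitely generated two-ended group. Then there exists a subgroup H of index at most 2 in G and a surjective homomorphism φ: H → ℤ with finite kernel; consequently G contains a subgroup of index exactly 2. -/
/-- A graph has exactly two ends. -/
def HasExactlyTwoEnds {V : Type*} (Γ : SimpleGraph V) : Prop :=
  ∃ e₁ e₂ : Γ.end, e₁ ≠ e₂ ∧ ∀ e : Γ.end, e = e₁ ∨ e = e₂

namespace St17

variable {G : Type*} [Group G] {S : Set G}

local notation "Γ" => cayleyGraph G S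

/-- Left multiplication as a graph hom. -/
def mulHom (g : G) : (Γ) →g (Γ) where
  toFun x := g * x
  map_rel' := by
    intro a b h
    exact And.intro (fun e => h.1 (mul_left_cancel e)) (by
      rcases h.2 with h2 | h2
      · left; rwa [mul_inv_rev, mul_assoc, inv_mul_cancel_left]
      · right; rwa [mul_inv_rev, mul_assoc, inv_mul_cancel_left])

lemma reachable_mul (g : G) {x y : G} (h : (Γ).Reachable x y) :
    (Γ).Reachable (g * x) (g * y) := by
  obtain ⟨p⟩ := h
  exact ⟨p.map (mulHom g)⟩

lemma preconnected (hgen : Subgroup.closure S = ⊤) : (Γ).Preconnected := by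
  have key : ∀ x : G, (Γ).Reachable 1 x := by
    intro x
    have hx : x ∈ Subgroup.closure S := by rw [hgen]; trivial
    induction hx using Subgroup.closure_induction with
    | mem s hs =>
      by_cases h1 : s = 1
      · rw [h1]
      · exact SimpleGraph.Adj.reachable (And.intro (Ne.symm h1) (Or.inl (by rwa [inv_one, one_mul])))
    | one => rfl
    | mul a b _ _ ha hb =>
      refine ha.trans ?_
      simpa using reachable_mul a hb
    | inv a _ ha =>
      have := reachable_mul a⁻¹ ha
      simpa using this.symm
  exact fun x y => (key x).symm.trans (key y)

/-- `InC S F v u`: there is a walk from `v` to `u` avoiding `F`. -/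
def InC (S : Set G) (F : Set G) (v u : G) : Prop :=
  ∃ p : (cayleyGraph G S).Walk v u, ∀ z ∈ p.support, z ∉ F

namespace InC

variable {F : Set G} {v u w : G}

lemma refl (hv : v ∉ F) : InC S F v v := ⟨SimpleGraph.Walk.nil, by simpa using hv⟩

lemma symm (h : InC S F v u) : InC S F u v := by
  obtain ⟨p, hp⟩ := h
  exact ⟨p.reverse, by simpa only [SimpleGraph.Walk.support_reverse, List.mem_reverse] using hp⟩

lemma trans (h : InC S F v u) (h2 : InC S F u w) : InC S F v w := by
  obtain ⟨p, hp⟩ := h; obtain ⟨q, hq⟩ := h2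
  refine ⟨p.append q, fun z hz => ?_⟩
  rcases (SimpleGraph.Walk.mem_support_append_iff _ _).mp hz with h | h
  exacts [hp z h, hq z h]

lemma notMem_left (h : InC S F v u) : v ∉ F := by
  obtain ⟨p, hp⟩ := h; exact hp v p.start_mem_support

lemma notMem_right (h : InC S F v u) : u ∉ F := by
  obtain ⟨p, hp⟩ := h; exact hp u p.end_mem_support

/-- every vertex on an avoiding walk is InC-reachable. -/
lemma of_support (p : (Γ).Walk v u) (hp : ∀ z ∈ p.support, z ∉ F) {z : G}
    (hz : z ∈ p.support) : InC S F v z := by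
  classical
  exact ⟨p.takeUntil z hz, fun y hy => hp y (p.support_takeUntil_subset hz hy)⟩

lemma mul (g : G) (h : InC S F v u) : InC S ((g * ·) '' F) (g * v) (g * u) := by
  obtain ⟨p, hp⟩ := h
  refine ⟨p.map (St17.mulHom g), fun z hz => ?_⟩
  replace hz : z ∈ (p.map (St17.mulHom g)).support := hz
  rw [SimpleGraph.Walk.support_map, List.mem_map] at hz
  obtain ⟨y, hy, rfl⟩ := hz
  rintro ⟨x, hx, hgx⟩
  exact hp y hy (by rwa [mul_left_cancel hgx] at hx)

end InC

/-- Characterization of `ComponentCompl.supp` via avoiding walks. -/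
lemma mem_supp_iff_inC {K : Set G} {v : G} (hv : v ∉ K) (u : G) :
    u ∈ ((Γ).componentComplMk hv : Set G) ↔ InC S K v u := by
  constructor
  · rintro ⟨hu, he⟩
    have hr : ((Γ).induce Kᶜ).Reachable ⟨u, hu⟩ ⟨v, hv⟩ :=
      SimpleGraph.ConnectedComponent.eq.mp he
    obtain ⟨p⟩ := hr
    suffices h : ∀ (a b : ↥(Kᶜ : Set G)) (p : ((Γ).induce Kᶜ).Walk a b), InC S K a.1 b.1 by
      exact (h _ _ p).symm
    intro a b p
    induction p with
    | nil => rename_i x; exact InC.refl ((Set.mem_compl_iff _ _).mp x.2)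
    | @cons a b c hab p ih =>
      refine InC.trans ⟨SimpleGraph.Walk.cons hab SimpleGraph.Walk.nil, ?_⟩ ih
      intro z hz
      change z ∈ [a.1, b.1] at hz
      simp only [SimpleGraph.Walk.support_cons, SimpleGraph.Walk.support_nil,
        List.mem_cons, List.mem_singleton] at hz
      rcases hz with rfl | hz
      · exact (Set.mem_compl_iff _ _).mp a.2
      · rcases hz with rfl | hz
        · exact (Set.mem_compl_iff _ _).mp b.2
        · exact absurd hz List.not_mem_nil
  · rintro ⟨p, hp⟩
    refine ⟨hp u p.end_mem_support, ?_⟩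
    rw [SimpleGraph.ConnectedComponent.eq]
    suffices h : ∀ (a b : G) (p : (Γ).Walk a b) (hp : ∀ z ∈ p.support, z ∉ K),
        ((Γ).induce Kᶜ).Reachable ⟨a, hp a p.start_mem_support⟩ ⟨b, hp b p.end_mem_support⟩ by
      exact (h _ _ p hp).symm
    intro a b p
    induction p with
    | nil => intro _; rfl
    | @cons a c b hab p ih =>
      intro hp
      have hc : c ∉ K := hp c (by simp [SimpleGraph.Walk.support_cons])
      refine SimpleGraph.Reachable.trans ?_
        (ih fun z hz => hp z (by simp [SimpleGraph.Walk.support_cons, hz]))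
      exact SimpleGraph.Adj.reachable (by exact hab)

open CategoryTheory Opposite

noncomputable def locallyFinite (hfin : S.Finite) : (Γ).LocallyFinite := by
  intro v
  apply Set.Finite.fintype
  apply Set.Finite.subset (Set.Finite.image (v * ·) (hfin.union hfin.inv))
  rintro y (hy : (Γ).Adj v y)
  rcases And.right hy with h | h
  · exact ⟨v⁻¹ * y, Or.inl h, by group⟩
  · exact ⟨v⁻¹ * y, Or.inr (by simpa using Set.inv_mem_inv.mpr h), by group⟩

lemma infinite_of_end (e : (Γ).end) : Infinite G := by
  by_contra hG
  rw [not_infinite_iff_finite] at hG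
  cases nonempty_fintype G
  obtain ⟨v, hv, -⟩ := (e.val (op (Finset.univ : Finset G))).exists_eq_mk
  exact hv (by simp)

lemma end_inf (e : (Γ).end) (K : (Finset G)ᵒᵖ) : (e.val K).supp.Infinite := by
  refine (e.val K).infinite_iff_in_all_ranges.mpr fun L h => ?_
  exact ⟨e.val (op L), e.prop (CategoryTheory.opHomOfLE h)⟩

lemma exists_end_eq (hfin : S.Finite) (hgen : Subgroup.closure S = ⊤) [Infinite G]
    (K : Finset G) (C : (Γ).ComponentCompl ↑K) (hC : C.supp.Infinite) :
    ∃ e : (Γ).end, e.val (op K) = C := by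
  classical
  haveI := locallyFinite (S := S) hfin
  haveI : Fact (Γ).Preconnected := ⟨preconnected hgen⟩
  set F := (Γ).componentComplFunctor with hF
  let s : Set (F.obj (op K)) := {C}
  haveI hne : ∀ j, Nonempty ((F.toPreimages s).obj j) := by
    intro j
    by_cases hKj : K ≤ j.unop
    · obtain ⟨D, hD⟩ := C.infinite_iff_in_all_ranges.mp hC j.unop hKj
      refine ⟨⟨D, ?_⟩⟩
      refine Set.mem_iInter.mpr ?_
      intro f
      exact hD
    · obtain ⟨D⟩ : Nonempty (F.obj j) := (Γ).componentCompl_nonempty_of_infinite j.unop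
      refine ⟨⟨D, ?_⟩⟩
      refine Set.mem_iInter.mpr ?_
      intro f
      exact absurd (le_of_op_hom f) hKj
  haveI hfin' : ∀ j, Finite (F.obj j) := fun j => (Γ).componentCompl_finite j.unop
  obtain ⟨sec, hsec⟩ := nonempty_sections_of_finite_inverse_system (F.toPreimages s)
  refine ⟨⟨fun j => (sec j).val, fun {j k} f => congrArg Subtype.val (hsec f)⟩, ?_⟩
  have hm := (sec (op K)).prop
  rw [Set.mem_iInter] at hm
  have := hm (𝟙 (op K))
  rw [Set.mem_preimage, CategoryTheory.FunctorToTypes.map_id_apply] at this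
  exact this

lemma junk_finite (hfin : S.Finite) (hgen : Subgroup.closure S = ⊤) (L : Finset G) :
    {v : G | ∃ h : v ∉ (L : Set G), ((Γ).componentComplMk h).supp.Finite}.Finite := by
  classical
  haveI := locallyFinite (S := S) hfin
  haveI : Fact (Γ).Preconnected := ⟨preconnected hgen⟩
  have hfinidx : {C : (Γ).ComponentCompl (↑L : Set G) | C.supp.Finite}.Finite := Set.toFinite _
  refine Set.Finite.subset (Set.Finite.biUnion hfinidx (fun C hC => hC)) ?_
  rintro v ⟨hv, hfinv⟩
  exact Set.mem_biUnion hfinv ((Γ).componentComplMk_mem hv)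

lemma InC.mono {F F' : Set G} {v u : G} (hF : F' ⊆ F) (h : InC S F v u) : InC S F' v u := by
  obtain ⟨p, hp⟩ := h
  exact ⟨p, fun z hz hzF => hp z hz (hF hzF)⟩

lemma supp_cl {K : Set G} (C : (Γ).ComponentCompl K) {v u : G} (hv : v ∈ C.supp)
    (h : InC S K v u) : u ∈ C.supp := by
  obtain ⟨hvK, rfl⟩ := hv
  exact (mem_supp_iff_inC hvK u).mpr h

lemma supp_conn {K : Set G} (C : (Γ).ComponentCompl K) {v u : G} (hv : v ∈ C.supp)
    (hu : u ∈ C.supp) : InC S K v u := by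
  obtain ⟨hvK, rfl⟩ := hv
  exact (mem_supp_iff_inC hvK u).mp hu

lemma image_mul_cancel (g : G) (X : Set G) : (g⁻¹ * ·) '' ((g * ·) '' X) = X := by
  ext x
  simp only [Set.mem_image]
  constructor
  · rintro ⟨y, ⟨z, hz, rfl⟩, rfl⟩
    simpa using hz
  · intro hx
    exact ⟨g * x, ⟨x, hx, rfl⟩, by group⟩

lemma exists_conn_superset (hgen : Subgroup.closure S = ⊤) (K₀ : Finset G) :
    ∃ K₁ : Finset G, K₀ ⊆ K₁ ∧ (1 : G) ∈ K₁ ∧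
      ∀ x ∈ K₁, ∀ y ∈ K₁, ∃ p : (Γ).Walk x y, ∀ z ∈ p.support, z ∈ K₁ := by
  classical
  have hreach : ∀ k : G, (Γ).Reachable 1 k := fun k => preconnected hgen 1 k
  set w : (k : G) → (Γ).Walk 1 k := fun k => (hreach k).some with hw
  set K₁ : Finset G := insert 1 (K₀ ∪ K₀.biUnion fun k => (w k).support.toFinset) with hK₁
  have hsub : K₀ ⊆ K₁ := fun x hx => by simp [hK₁, hx]
  have h1 : (1 : G) ∈ K₁ := by simp [hK₁]
  have hbase : ∀ x ∈ K₁, ∃ p : (Γ).Walk 1 x, ∀ z ∈ p.support, z ∈ K₁ := by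
    intro x hx
    simp only [hK₁, Finset.mem_insert, Finset.mem_union, Finset.mem_biUnion,
      List.mem_toFinset] at hx
    rcases hx with rfl | hx | ⟨k, hk, hxk⟩
    · exact ⟨SimpleGraph.Walk.nil, by simpa using h1⟩
    · refine ⟨w x, fun z hz => ?_⟩
      simp only [hK₁, Finset.mem_insert, Finset.mem_union, Finset.mem_biUnion,
        List.mem_toFinset]
      exact Or.inr (Or.inr ⟨x, hx, hz⟩)
    · refine ⟨(w k).takeUntil x hxk, fun z hz => ?_⟩
      simp only [hK₁, Finset.mem_insert, Finset.mem_union, Finset.mem_biUnion,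
        List.mem_toFinset]
      exact Or.inr (Or.inr ⟨k, hk, (w k).support_takeUntil_subset hxk hz⟩)
  refine ⟨K₁, hsub, h1, fun x hx y hy => ?_⟩
  obtain ⟨px, hpx⟩ := hbase x hx
  obtain ⟨py, hpy⟩ := hbase y hy
  refine ⟨px.reverse.append py, fun z hz => ?_⟩
  rcases (SimpleGraph.Walk.mem_support_append_iff _ _).mp hz with h | h
  · exact hpx z (by rwa [SimpleGraph.Walk.support_reverse, List.mem_reverse] at h)
  · exact hpy z h

structure Pack (G : Type*) [Group G] (S : Set G) where
  Kf : Finset G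
  A : Set G
  B : Set G
  hKne : Kf.Nonempty
  hconn : ∀ x ∈ Kf, ∀ y ∈ Kf, ∃ p : (cayleyGraph G S).Walk x y, ∀ z ∈ p.support, z ∈ Kf
  hAcl : ∀ v ∈ A, ∀ u, InC S (↑Kf) v u → u ∈ A
  hBcl : ∀ v ∈ B, ∀ u, InC S (↑Kf) v u → u ∈ B
  hAconn : ∀ v ∈ A, ∀ u ∈ A, InC S (↑Kf) v u
  hBconn : ∀ v ∈ B, ∀ u ∈ B, InC S (↑Kf) v u
  hAB : Disjoint A B
  hKA : Disjoint (↑Kf : Set G) A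
  hKB : Disjoint (↑Kf : Set G) B
  hAinf : A.Infinite
  hBinf : B.Infinite
  hcov : ∀ v : G, v ∈ Kf ∨ v ∈ A ∨ v ∈ B
  hdi : ∀ g : G, ((((g * ·) '' A) \ A) ∪ (A \ ((g * ·) '' A))).Finite ∨
      ((((g * ·) '' A) \ B) ∪ (B \ ((g * ·) '' A))).Finite

theorem exists_pack (hfin : S.Finite) (hgen : Subgroup.closure S = ⊤)
    (htwo : HasExactlyTwoEnds (Γ)) : Nonempty (Pack G S) := by
  classical
  obtain ⟨e₁, e₂, hne, hall⟩ := htwo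
  haveI : Infinite G := infinite_of_end e₁
  haveI := locallyFinite (S := S) hfin
  haveI : Fact (Γ).Preconnected := ⟨preconnected hgen⟩
  -- the ends differ somewhere
  have hdiff : ∃ K₀ : Finset G, e₁.val (op K₀) ≠ e₂.val (op K₀) := by
    by_contra h
    push_neg at h
    apply hne
    apply Subtype.ext
    funext j
    have := h j.unop
    rwa [op_unop] at this
  obtain ⟨K₀, hK₀⟩ := hdiff
  have hmono : ∀ L : Finset G, K₀ ⊆ L → e₁.val (op L) ≠ e₂.val (op L) := by
    intro L hL heq
    apply hK₀
    have h1 := e₁.prop (opHomOfLE hL)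
    have h2 := e₂.prop (opHomOfLE hL)
    rw [← h1, ← h2, heq]
  -- every infinite component is an end value
  have hinfc : ∀ (L : Finset G) (C : (Γ).ComponentCompl ↑L), C.supp.Infinite →
      C = e₁.val (op L) ∨ C = e₂.val (op L) := by
    intro L C hC
    obtain ⟨e, he⟩ := exists_end_eq hfin hgen L C hC
    rcases hall e with rfl | rfl
    · exact Or.inl he.symm
    · exact Or.inr he.symm
  -- cover at any level
  have hcovL : ∀ (L : Finset G) (v : G) (hv : v ∉ (↑L : Set G)),
      v ∈ (e₁.val (op L)).supp ∨ v ∈ (e₂.val (op L)).supp ∨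
        ((Γ).componentComplMk hv).supp.Finite := by
    intro L v hv
    by_cases hf : ((Γ).componentComplMk hv).supp.Finite
    · exact Or.inr (Or.inr hf)
    · rcases hinfc L _ hf with h | h
      · exact Or.inl (h ▸ (Γ).componentComplMk_mem hv)
      · exact Or.inr (Or.inl (h ▸ (Γ).componentComplMk_mem hv))
  obtain ⟨K₁, hK₀₁, h1K₁, hK₁conn⟩ := exists_conn_superset hgen K₀
  set J := {v : G | ∃ h : v ∉ (↑K₁ : Set G), ((Γ).componentComplMk h).supp.Finite} with hJdef
  have hJfin : J.Finite := junk_finite hfin hgen K₁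
  set K₂ : Finset G := K₁ ∪ hJfin.toFinset with hK₂def
  have hK₁₂ : K₁ ⊆ K₂ := Finset.subset_union_left
  have hJK₂ : ∀ v ∈ J, v ∈ K₂ := fun v hv => by simp [hK₂def, hv]
  have hK₀₂ : K₀ ⊆ K₂ := hK₀₁.trans hK₁₂
  set A := (e₁.val (op K₂)).supp with hAdef
  set B := (e₂.val (op K₂)).supp with hBdef
  have hne₂ : e₁.val (op K₂) ≠ e₂.val (op K₂) := hmono K₂ hK₀₂
  -- `hcov`
  have hcov : ∀ v : G, v ∈ K₂ ∨ v ∈ A ∨ v ∈ B := by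
    intro v
    by_cases hvK : v ∈ K₂
    · exact Or.inl hvK
    right
    have hvK' : v ∉ (↑K₂ : Set G) := by simpa using hvK
    rcases hcovL K₂ v hvK' with h | h | h
    · exact Or.inl h
    · exact Or.inr h
    · -- finite component over K₂: impossible
      exfalso
      have hvK₁ : v ∉ (↑K₁ : Set G) := fun hv => hvK (hK₁₂ (by simpa using hv))
      set E' := (Γ).componentComplMk hvK₁ with hE'def
      have hE'inf : E'.supp.Infinite := fun hfinE' => hvK (hJK₂ v ⟨hvK₁, hfinE'⟩)
      -- E'.supp avoids K₂
      have hE'K₂ : ∀ z ∈ E'.supp, z ∉ (↑K₂ : Set G) := by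
        intro z hz hzK₂
        have hzK₁ : z ∉ (↑K₁ : Set G) := hz.1
        have : z ∈ K₁ ∨ z ∈ J := by
          have := hzK₂
          simp only [hK₂def, Finset.coe_union, Set.mem_union, Set.Finite.coe_toFinset] at this
          exact this
        rcases this with h' | h'
        · exact hzK₁ (by simpa using h')
        · obtain ⟨hz1, hz2⟩ := h'
          obtain ⟨hz3, hz4⟩ := hz
          have : (Γ).componentComplMk hz1 = E' := by
            have : hz1 = hz3 := rfl
            rw [this, hz4]
          exact hE'inf (this ▸ hz2)
      -- E'.supp ⊆ supp of v's component over K₂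
      have hsub : E'.supp ⊆ ((Γ).componentComplMk hvK').supp := by
        intro z hz
        have hInC : InC S (↑K₁) v z := supp_conn E' ((Γ).componentComplMk_mem hvK₁) hz
        obtain ⟨p, hp⟩ := hInC
        have hp2 : ∀ y ∈ p.support, y ∉ (↑K₂ : Set G) := by
          intro y hy
          exact hE'K₂ y (supp_cl E' ((Γ).componentComplMk_mem hvK₁) (InC.of_support p hp hy))
        exact (mem_supp_iff_inC hvK' z).mpr ⟨p, hp2⟩
      exact (hE'inf.mono hsub) h
  -- connectivity of K₂
  have hKconn₂ : ∀ x ∈ K₂, ∀ y ∈ K₂, ∃ p : (Γ).Walk x y, ∀ z ∈ p.support, z ∈ K₂ := by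
    have hbase : ∀ x ∈ K₂, ∃ k ∈ K₁, ∃ p : (Γ).Walk x k, ∀ z ∈ p.support, z ∈ K₂ := by
      intro x hx
      rcases Finset.mem_union.mp hx with hx | hx
      · exact ⟨x, hx, SimpleGraph.Walk.nil, by simpa using hK₁₂ hx⟩
      · rw [Set.Finite.mem_toFinset] at hx
        obtain ⟨hxK₁, hxfin⟩ := hx
        set C := (Γ).componentComplMk hxK₁ with hCdef
        have hCsuppJ : ∀ z ∈ C.supp, z ∈ K₂ := by
          rintro z ⟨hz1, hz2⟩
          apply hJK₂
          refine ⟨hz1, ?_⟩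
          rw [hz2]
          exact hxfin
        obtain ⟨⟨c, k⟩, hcC, hkK₁, hadj⟩ :=
          C.exists_adj_boundary_pair (preconnected hgen) ⟨1, by simpa using h1K₁⟩
        obtain ⟨p, hp⟩ := supp_conn C ((Γ).componentComplMk_mem hxK₁) hcC
        refine ⟨k, hkK₁, p.append (SimpleGraph.Walk.cons hadj SimpleGraph.Walk.nil), ?_⟩
        intro z hz
        rcases (SimpleGraph.Walk.mem_support_append_iff _ _).mp hz with h | h
        · exact hCsuppJ z (supp_cl C ((Γ).componentComplMk_mem hxK₁) (InC.of_support p hp h))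
        · simp only [SimpleGraph.Walk.support_cons, SimpleGraph.Walk.support_nil,
            List.mem_cons, List.mem_singleton] at h
          rcases h with rfl | rfl | h
          · exact hCsuppJ z hcC
          · exact hK₁₂ hkK₁
          · exact absurd h List.not_mem_nil
    intro x hx y hy
    obtain ⟨kx, hkx, px, hpx⟩ := hbase x hx
    obtain ⟨ky, hky, py, hpy⟩ := hbase y hy
    obtain ⟨q, hq⟩ := hK₁conn kx hkx ky hky
    refine ⟨(px.append q).append py.reverse, fun z hz => ?_⟩
    rcases (SimpleGraph.Walk.mem_support_append_iff _ _).mp hz with h | h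
    · rcases (SimpleGraph.Walk.mem_support_append_iff _ _).mp h with h' | h'
      · exact hpx z h'
      · exact hK₁₂ (hq z h')
    · exact hpy z (by rwa [SimpleGraph.Walk.support_reverse, List.mem_reverse] at h)
  have hABdisj : Disjoint A B := SimpleGraph.ComponentCompl.pairwise_disjoint hne₂
  have hKAdisj : Disjoint (↑K₂ : Set G) A := (e₁.val (op K₂)).disjoint_right
  have hKBdisj : Disjoint (↑K₂ : Set G) B := (e₂.val (op K₂)).disjoint_right
  have hAinf : A.Infinite := end_inf e₁ (op K₂)
  have hBinf : B.Infinite := end_inf e₂ (op K₂)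
  have hAcl : ∀ v ∈ A, ∀ u, InC S (↑K₂) v u → u ∈ A := fun v hv u h => supp_cl _ hv h
  have hBcl : ∀ v ∈ B, ∀ u, InC S (↑K₂) v u → u ∈ B := fun v hv u h => supp_cl _ hv h
  -- the dichotomy
  have hdi : ∀ g : G, ((((g * ·) '' A) \ A) ∪ (A \ ((g * ·) '' A))).Finite ∨
      ((((g * ·) '' A) \ B) ∪ (B \ ((g * ·) '' A))).Finite := by
    intro g
    set L : Finset G := K₂ ∪ K₂.image (g * ·) with hLdef
    have hK₂L : K₂ ⊆ L := Finset.subset_union_left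
    set A' := (e₁.val (op L)).supp with hA'def
    set B' := (e₂.val (op L)).supp with hB'def
    have hA'A : A' ⊆ A := by
      intro z hz
      have h1 := e₁.prop (opHomOfLE hK₂L)
      rw [SimpleGraph.componentComplFunctor_map] at h1
      rw [hAdef, ← h1]
      exact SimpleGraph.ComponentCompl.subset_hom _ (Finset.coe_subset.mpr hK₂L) hz
    have hB'B : B' ⊆ B := by
      intro z hz
      have h1 := e₂.prop (opHomOfLE hK₂L)
      rw [SimpleGraph.componentComplFunctor_map] at h1
      rw [hBdef, ← h1]
      exact SimpleGraph.ComponentCompl.subset_hom _ (Finset.coe_subset.mpr hK₂L) hz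
    set JL := {v : G | ∃ h : v ∉ (↑L : Set G), ((Γ).componentComplMk h).supp.Finite} with hJLdef
    have hJLfin : JL.Finite := junk_finite hfin hgen L
    have hcovL' : ∀ v : G, v ∈ (↑L : Set G) ∨ v ∈ A' ∨ v ∈ B' ∨ v ∈ JL := by
      intro v
      by_cases hv : v ∈ (↑L : Set G)
      · exact Or.inl hv
      · rcases hcovL L v hv with h | h | h
        · exact Or.inr (Or.inl h)
        · exact Or.inr (Or.inr (Or.inl h))
        · exact Or.inr (Or.inr (Or.inr ⟨hv, h⟩))
    set gA := (g * ·) '' A with hgAdef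
    set gB := (g * ·) '' B with hgBdef
    set gK := (g * ·) '' (↑K₂ : Set G) with hgKdef
    have hginj : Function.Injective (g * ·) := mul_right_injective g
    have hgKL : gK ⊆ (↑L : Set G) := by
      rintro z ⟨k, hk, rfl⟩
      simp only [hLdef, Finset.coe_union, Finset.coe_image, Set.mem_union]
      exact Or.inr ⟨k, hk, rfl⟩
    have hcovg : ∀ v : G, v ∈ gK ∨ v ∈ gA ∨ v ∈ gB := by
      intro v
      have hv : v = g * (g⁻¹ * v) := by group
      rcases hcov (g⁻¹ * v) with h | h | h
      · exact Or.inl ⟨g⁻¹ * v, by simpa using h, hv.symm⟩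
      · exact Or.inr (Or.inl ⟨g⁻¹ * v, h, hv.symm⟩)
      · exact Or.inr (Or.inr ⟨g⁻¹ * v, h, hv.symm⟩)
    have hgAB : Disjoint gA gB := Set.disjoint_image_of_injective hginj hABdisj
    have hgKA : Disjoint gK gA := Set.disjoint_image_of_injective hginj hKAdisj
    have hgKB : Disjoint gK gB := Set.disjoint_image_of_injective hginj hKBdisj
    have hgAcl : ∀ v ∈ gA, ∀ u, InC S gK v u → u ∈ gA := by
      rintro v ⟨a, ha, rfl⟩ u hInC
      have h2 := InC.mul g⁻¹ hInC
      rw [hgKdef, image_mul_cancel] at h2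
      rw [inv_mul_cancel_left] at h2
      exact ⟨g⁻¹ * u, hAcl a ha _ h2, by group⟩
    have hgBcl : ∀ v ∈ gB, ∀ u, InC S gK v u → u ∈ gB := by
      rintro v ⟨a, ha, rfl⟩ u hInC
      have h2 := InC.mul g⁻¹ hInC
      rw [hgKdef, image_mul_cancel] at h2
      rw [inv_mul_cancel_left] at h2
      exact ⟨g⁻¹ * u, hBcl a ha _ h2, by group⟩
    -- A' and B' each lie in gA or gB
    have hsplit : ∀ (X : Set G), X = (e₁.val (op L)).supp ∨ X = (e₂.val (op L)).supp →
        X ⊆ gA ∨ X ⊆ gB := by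
      intro X hX
      have hXsupp : ∃ C : (Γ).ComponentCompl (↑L : Set G), X = C.supp := by
        rcases hX with rfl | rfl
        exacts [⟨_, rfl⟩, ⟨_, rfl⟩]
      obtain ⟨C, rfl⟩ := hXsupp
      have hCinf : C.supp.Infinite := by
        rcases hX with h | h
        · rw [h]; exact end_inf e₁ (op L)
        · rw [h]; exact end_inf e₂ (op L)
      obtain ⟨x₀, hx₀⟩ := hCinf.nonempty
      have hx₀L : x₀ ∉ (↑L : Set G) := hx₀.1
      have hx₀gK : x₀ ∉ gK := fun h => hx₀L (hgKL h)
      have key : ∀ Y : Set G, (∀ v ∈ Y, ∀ u, InC S gK v u → u ∈ Y) → x₀ ∈ Y → C.supp ⊆ Y := by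
        intro Y hYcl hx₀Y z hz
        have hInCL : InC S (↑L : Set G) x₀ z := supp_conn C hx₀ hz
        exact hYcl x₀ hx₀Y z (hInCL.mono hgKL)
      rcases hcovg x₀ with h | h | h
      · exact absurd h hx₀gK
      · exact Or.inl (key gA hgAcl h)
      · exact Or.inr (key gB hgBcl h)
    have hgAinf : gA.Infinite := hAinf.image (Set.injOn_of_injective hginj)
    have hgBinf : gB.Infinite := hBinf.image (Set.injOn_of_injective hginj)
    have hLJfin : ((↑L : Set G) ∪ JL).Finite := (L.finite_toSet).union hJLfin
    rcases hsplit A' (Or.inl rfl) with hA'g | hA'g <;> rcases hsplit B' (Or.inr rfl) with hB'g | hB'g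
    · -- A' ⊆ gA, B' ⊆ gA : gB would be finite
      exfalso
      apply hgBinf
      apply hLJfin.subset
      intro v hv
      rcases hcovL' v with h | h | h | h
      · exact Or.inl h
      · exact absurd (hA'g h) (Set.disjoint_left.mp hgAB.symm hv)
      · exact absurd (hB'g h) (Set.disjoint_left.mp hgAB.symm hv)
      · exact Or.inr h
    · -- A' ⊆ gA, B' ⊆ gB : gA ≈ A
      left
      apply hLJfin.subset
      intro v hv
      rcases hv with ⟨hv1, hv2⟩ | ⟨hv1, hv2⟩
      · -- v ∈ gA \ A
        rcases hcovL' v with h | h | h | h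
        · exact Or.inl h
        · exact absurd (hA'A h) hv2
        · exact absurd (hB'g h) (Set.disjoint_left.mp hgAB hv1)
        · exact Or.inr h
      · -- v ∈ A \ gA
        rcases hcovL' v with h | h | h | h
        · exact Or.inl h
        · exact absurd (hA'g h) hv2
        · exact absurd (hB'B h) (Set.disjoint_left.mp hABdisj hv1)
        · exact Or.inr h
    · -- A' ⊆ gB, B' ⊆ gA : gA ≈ B
      right
      apply hLJfin.subset
      intro v hv
      rcases hv with ⟨hv1, hv2⟩ | ⟨hv1, hv2⟩
      · -- v ∈ gA \ B
        rcases hcovL' v with h | h | h | h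
        · exact Or.inl h
        · exact absurd (hA'g h) (Set.disjoint_left.mp hgAB hv1)
        · exact absurd (hB'B h) hv2
        · exact Or.inr h
      · -- v ∈ B \ gA
        rcases hcovL' v with h | h | h | h
        · exact Or.inl h
        · exact absurd (hA'A h) (Set.disjoint_left.mp hABdisj.symm hv1)
        · exact absurd (hB'g h) hv2
        · exact Or.inr h
    · -- A' ⊆ gB, B' ⊆ gB : gA finite
      exfalso
      apply hgAinf
      apply hLJfin.subset
      intro v hv
      rcases hcovL' v with h | h | h | h
      · exact Or.inl h
      · exact absurd (hA'g h) (Set.disjoint_left.mp hgAB hv)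
      · exact absurd (hB'g h) (Set.disjoint_left.mp hgAB hv)
      · exact Or.inr h
  exact ⟨{ Kf := K₂, A := A, B := B,
           hKne := ⟨1, hK₁₂ h1K₁⟩,
           hconn := hKconn₂,
           hAcl := hAcl, hBcl := hBcl,
           hAconn := fun v hv u hu => supp_conn _ hv hu,
           hBconn := fun v hv u hu => supp_conn _ hv hu,
           hAB := hABdisj, hKA := hKAdisj, hKB := hKBdisj,
           hAinf := hAinf, hBinf := hBinf,
           hcov := hcov, hdi := hdi }⟩

/-! ### Symmetric-difference-finite relation and the defect cocycle -/

section SDFkit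

variable {α β : Type*}

/-- `X` and `Y` have finite symmetric difference. -/
def SDF (X Y : Set α) : Prop := ((X \ Y) ∪ (Y \ X)).Finite

namespace SDF

lemma refl (X : Set α) : SDF X X := by simp [SDF]

lemma symm {X Y : Set α} (h : SDF X Y) : SDF Y X := by
  rwa [SDF, Set.union_comm]

lemma fin₁ {X Y : Set α} (h : SDF X Y) : (X \ Y).Finite := h.subset Set.subset_union_left

lemma fin₂ {X Y : Set α} (h : SDF X Y) : (Y \ X).Finite := h.subset Set.subset_union_right

lemma trans {X Y Z : Set α} (h : SDF X Y) (h' : SDF Y Z) : SDF X Z := by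
  apply Set.Finite.subset (h.union h')
  intro v hv
  simp only [Set.mem_union, Set.mem_diff] at hv ⊢
  tauto

lemma image {f : α → β} (hf : Function.Injective f) {X Y : Set α} (h : SDF X Y) :
    SDF (f '' X) (f '' Y) := by
  rw [SDF, ← Set.image_diff hf, ← Set.image_diff hf, ← Set.image_union]
  exact Set.Finite.image f h

lemma compl {X Y : Set α} (h : SDF X Y) : SDF Xᶜ Yᶜ := by
  apply Set.Finite.subset h
  intro v hv
  simp only [Set.mem_union, Set.mem_diff, Set.mem_compl_iff] at hv ⊢
  tauto

lemma union_finite {X Y U W : Set α} (h : SDF X Y) (hU : U.Finite) (hW : W.Finite) :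
    SDF (X ∪ U) (Y ∪ W) := by
  apply Set.Finite.subset (h.union (hU.union hW))
  intro v hv
  simp only [Set.mem_union, Set.mem_diff] at hv ⊢
  tauto

end SDF

/-- The defect `|X \ Y| - |Y \ X|`. -/
noncomputable def dd (X Y : Set α) : ℤ := (X \ Y).ncard - (Y \ X).ncard

lemma dd_self (X : Set α) : dd X X = 0 := by simp [dd]

lemma dd_image {f : α → β} (hf : Function.Injective f) (X Y : Set α) :
    dd (f '' X) (f '' Y) = dd X Y := by
  rw [dd, dd, ← Set.image_diff hf, ← Set.image_diff hf,
    Set.ncard_image_of_injective _ hf, Set.ncard_image_of_injective _ hf]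

lemma dd_cocycle {X Y Z : Set α} (hXY : SDF X Y) (hYZ : SDF Y Z) :
    dd X Z = dd X Y + dd Y Z := by
  classical
  set s110 := (X ∩ Y) \ Z with h110
  set s101 := (X ∩ Z) \ Y with h101
  set s011 := (Y ∩ Z) \ X with h011
  set s100 := X \ (Y ∪ Z) with h100
  set s010 := Y \ (X ∪ Z) with h010
  set s001 := Z \ (X ∪ Y) with h001
  have f110 : s110.Finite := hYZ.fin₁.subset (by intro v hv; simp [h110] at hv ⊢; tauto)
  have f101 : s101.Finite := hXY.fin₁.subset (by intro v hv; simp [h101] at hv ⊢; tauto)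
  have f011 : s011.Finite := hXY.fin₂.subset (by intro v hv; simp [h011] at hv ⊢; tauto)
  have f100 : s100.Finite := hXY.fin₁.subset (by intro v hv; simp [h100] at hv ⊢; tauto)
  have f010 : s010.Finite := hXY.fin₂.subset (by intro v hv; simp [h010] at hv ⊢; tauto)
  have f001 : s001.Finite := hYZ.fin₂.subset (by intro v hv; simp [h001] at hv ⊢; tauto)
  have eXZ : X \ Z = s110 ∪ s100 := by ext v; simp [h110, h100]; tauto
  have eZX : Z \ X = s011 ∪ s001 := by ext v; simp [h011, h001]; tauto
  have eXY : X \ Y = s101 ∪ s100 := by ext v; simp [h101, h100]; tauto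
  have eYX : Y \ X = s011 ∪ s010 := by ext v; simp [h011, h010]; tauto
  have eYZ : Y \ Z = s110 ∪ s010 := by ext v; simp [h110, h010]; tauto
  have eZY : Z \ Y = s101 ∪ s001 := by ext v; simp [h101, h001]; tauto
  have d1 : Disjoint s110 s100 := by rw [Set.disjoint_left]; intro v hv hv2; simp [h110, h100] at hv hv2; tauto
  have d2 : Disjoint s011 s001 := by rw [Set.disjoint_left]; intro v hv hv2; simp [h011, h001] at hv hv2; tauto
  have d3 : Disjoint s101 s100 := by rw [Set.disjoint_left]; intro v hv hv2; simp [h101, h100] at hv hv2; tauto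
  have d4 : Disjoint s011 s010 := by rw [Set.disjoint_left]; intro v hv hv2; simp [h011, h010] at hv hv2; tauto
  have d5 : Disjoint s110 s010 := by rw [Set.disjoint_left]; intro v hv hv2; simp [h110, h010] at hv hv2; tauto
  have d6 : Disjoint s101 s001 := by rw [Set.disjoint_left]; intro v hv hv2; simp [h101, h001] at hv hv2; tauto
  rw [dd, dd, dd, eXZ, eZX, eXY, eYX, eYZ, eZY,
    Set.ncard_union_eq d1 f110 f100, Set.ncard_union_eq d2 f011 f001,
    Set.ncard_union_eq d3 f101 f100, Set.ncard_union_eq d4 f011 f010,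
    Set.ncard_union_eq d5 f110 f010, Set.ncard_union_eq d6 f101 f001]
  push_cast
  ring

end SDFkit

lemma metric_lemma (hpre : (Γ).Preconnected) (Kq : Finset G) (hKne : Kq.Nonempty)
    (X Y : Set G) (g : G)
    (hKX : Disjoint (↑Kq : Set G) X) (hKY : Disjoint (↑Kq : Set G) Y) (hXY : Disjoint X Y)
    (hXcl : ∀ v ∈ X, ∀ u, InC S (↑Kq) v u → u ∈ X)
    (hgX : ∀ x ∈ X, g * x ∈ X) (hgK : ∀ k ∈ Kq, g * k ∈ Y)
    (hXne : X.Nonempty) : False := by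
  classical
  have main : ∀ n : ℕ, ∀ x ∈ X, ∀ k ∈ Kq, (Γ).dist x k ≠ n := by
    intro n
    induction n using Nat.strong_induction_on with
    | _ n ih =>
      intro x hx k hk hdist
      obtain ⟨p, hp⟩ := (hpre x k).exists_walk_length_eq_dist
      rcases Nat.eq_zero_or_pos n with rfl | hpos
      · rw [hdist] at hp
        have hxk : x = k := SimpleGraph.Walk.eq_of_length_eq_zero hp
        exact Set.disjoint_left.mp hKX hk (hxk ▸ hx)
      · set q := p.map (mulHom g) with hq
        have hqlen : q.length = n := by
          rw [hq, SimpleGraph.Walk.length_map, hp, hdist]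
        have hhit : ∃ z ∈ q.support, z ∈ (↑Kq : Set G) := by
          by_contra h
          push_neg at h
          have hInC : InC S (↑Kq) (g * x) (g * k) := ⟨q, h⟩
          exact Set.disjoint_left.mp hXY (hXcl _ (hgX x hx) _ hInC) (hgK k hk)
        obtain ⟨z, hzq, hzK⟩ := hhit
        have hlen : (q.takeUntil z hzq).length + (q.dropUntil z hzq).length = n := by
          rw [← SimpleGraph.Walk.length_append, q.take_spec hzq, hqlen]
        have hdrop_pos : 0 < (q.dropUntil z hzq).length := by
          rcases Nat.eq_zero_or_pos (q.dropUntil z hzq).length with h0 | h0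
          · exfalso
            have hz : z = g * k := SimpleGraph.Walk.eq_of_length_eq_zero h0
            exact Set.disjoint_left.mp hKY hzK (hz ▸ hgK k hk)
          · exact h0
        have htake : (q.takeUntil z hzq).length < n := by omega
        have hdle : (Γ).dist (g * x) z ≤ (q.takeUntil z hzq).length :=
          SimpleGraph.dist_le _
        exact ih ((Γ).dist (g * x) z) (lt_of_le_of_lt hdle htake)
          (g * x) (hgX x hx) z (by simpa using hzK) rfl
  obtain ⟨x, hx⟩ := hXne
  obtain ⟨k, hk⟩ := hKne
  exact main ((Γ).dist x k) x hx k hk rfl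

lemma image_one_mul (X : Set G) : ((1 : G) * ·) '' X = X := by
  ext v; simp

lemma image_mul_comp (a b : G) (X : Set G) :
    ((a * b) * ·) '' X = (a * ·) '' ((b * ·) '' X) := by
  rw [Set.image_image]
  ext v
  simp only [Set.mem_image]
  constructor
  · rintro ⟨x, hx, rfl⟩; exact ⟨x, hx, (mul_assoc a b x).symm⟩
  · rintro ⟨x, hx, rfl⟩; exact ⟨x, hx, mul_assoc a b x⟩

lemma image_cl (g : G) {K X : Set G} (hX : ∀ v ∈ X, ∀ u, InC S K v u → u ∈ X) :
    ∀ v ∈ (g * ·) '' X, ∀ u, InC S ((g * ·) '' K) v u → u ∈ (g * ·) '' X := by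
  rintro v ⟨x, hx, rfl⟩ u hInC
  have h2 := InC.mul g⁻¹ hInC
  rw [image_mul_cancel] at h2
  rw [inv_mul_cancel_left] at h2
  exact ⟨g⁻¹ * u, hX x hx _ h2, by group⟩

theorem main (hfin : S.Finite) (hgen : Subgroup.closure S = ⊤) (P : Pack G S) [Infinite G] :
    ∃ H : Subgroup G, (H.index = 1 ∨ H.index = 2) ∧
      ∃ φ : H →* Multiplicative ℤ, Function.Surjective φ ∧ Finite φ.ker := by
  classical
  obtain ⟨Kf, A, B, hKne, hconn, hAcl, hBcl, hAconn, hBconn, hAB, hKA, hKB,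
    hAinf, hBinf, hcov, hdi⟩ := P
  have hKfin : (↑Kf : Set G).Finite := Kf.finite_toSet
  set HS : Subgroup G := {
    carrier := {g : G | SDF ((g * ·) '' A) A}
    one_mem' := by
      simp only [Set.mem_setOf_eq, image_one_mul]
      exact SDF.refl A
    mul_mem' := by
      intro a b ha hb
      simp only [Set.mem_setOf_eq] at *
      rw [image_mul_comp]
      exact (hb.image (mul_right_injective a)).trans ha
    inv_mem' := by
      intro a ha
      simp only [Set.mem_setOf_eq] at *
      have h2 := ha.image (mul_right_injective a⁻¹)
      rw [image_mul_cancel] at h2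
      exact h2.symm } with hHSdef
  have hmemHS : ∀ g : G, g ∈ HS ↔ SDF ((g * ·) '' A) A := fun _ => Iff.rfl
  -- the two alternatives are mutually exclusive
  have hxor : ∀ g : G, SDF ((g * ·) '' A) A → SDF ((g * ·) '' A) B → False := by
    intro g h1 h2
    have hSAB : SDF A B := h1.symm.trans h2
    apply hAinf
    apply hSAB.subset
    intro v hv
    exact Or.inl ⟨hv, Set.disjoint_left.mp hAB hv⟩
  -- complements
  have hBc : B = (A ∪ (↑Kf : Set G))ᶜ := by
    ext v
    simp only [Set.mem_compl_iff, Set.mem_union]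
    constructor
    · intro hv hor
      rcases hor with h | h
      · exact Set.disjoint_left.mp hAB.symm hv h
      · exact Set.disjoint_left.mp hKB h hv
    · intro hv
      rcases hcov v with h | h | h
      · exact absurd (Or.inr (by simpa using h)) hv
      · exact absurd (Or.inl h) hv
      · exact h
  have hAc : A = (B ∪ (↑Kf : Set G))ᶜ := by
    ext v
    simp only [Set.mem_compl_iff, Set.mem_union]
    constructor
    · intro hv hor
      rcases hor with h | h
      · exact Set.disjoint_left.mp hAB hv h
      · exact Set.disjoint_left.mp hKA h hv
    · intro hv
      rcases hcov v with h | h | h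
      · exact absurd (Or.inr (by simpa using h)) hv
      · exact h
      · exact absurd (Or.inl h) hv
  have hbij : ∀ g : G, Function.Bijective (g * ·) := fun g => Group.mulLeft_bijective g
  have hgBeq : ∀ g : G, (g * ·) '' B = (((g * ·) '' A) ∪ ((g * ·) '' (↑Kf : Set G)))ᶜ := by
    intro g
    rw [hBc, Set.image_compl_eq (hbij g), Set.image_union]
  have hgAeq : ∀ g : G, (g * ·) '' A = (((g * ·) '' B) ∪ ((g * ·) '' (↑Kf : Set G)))ᶜ := by
    intro g
    rw [hAc, Set.image_compl_eq (hbij g), Set.image_union]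
  have hKim : ∀ g : G, ((g * ·) '' (↑Kf : Set G)).Finite := fun g => hKfin.image _
  have hBtrans : ∀ g : G, SDF ((g * ·) '' A) A → SDF ((g * ·) '' B) B := by
    intro g h
    rw [hgBeq g, hBc]
    exact (h.union_finite (hKim g) hKfin).compl
  have hB2A : ∀ g : G, SDF ((g * ·) '' A) B → SDF ((g * ·) '' B) A := by
    intro g h
    rw [hgBeq g]
    nth_rewrite 2 [hAc]
    exact (h.union_finite (hKim g) hKfin).compl
  -- index dichotomy
  have hindex : HS.index = 1 ∨ HS.index = 2 := by
    by_cases htop : HS = ⊤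
    · exact Or.inl (Subgroup.index_eq_one.mpr htop)
    · right
      rw [Subgroup.index_eq_two_iff]
      obtain ⟨a, ha⟩ : ∃ a : G, a ∉ HS := by
        by_contra h
        push_neg at h
        exact htop (Subgroup.eq_top_iff' HS |>.mpr h)
      refine ⟨a, fun b => ?_⟩
      by_cases hb : b ∈ HS
      · refine Or.inr ⟨hb, fun hba => ?_⟩
        exact ha (by simpa using HS.mul_mem (HS.inv_mem hb) hba)
      · refine Or.inl ⟨?_, hb⟩
        have haB : SDF ((a * ·) '' A) B := (hdi a).resolve_left ha
        have hbB : SDF ((b * ·) '' A) B := (hdi b).resolve_left hb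
        rw [hmemHS, image_mul_comp]
        exact ((haB.image (mul_right_injective b)).trans (hB2A b hbB))
  -- the defect function
  set f : G → ℤ := fun g => dd A ((g * ·) '' A) with hfdef
  have hfhom : ∀ a b : G, a ∈ HS → b ∈ HS → f (a * b) = f a + f b := by
    intro a b ha hb
    rw [hmemHS] at ha hb
    have h1 : dd A ((a * b * ·) '' A) = dd A ((a * ·) '' A) + dd ((a * ·) '' A) ((a * ·) '' ((b * ·) '' A)) := by
      rw [image_mul_comp]
      exact dd_cocycle ha.symm ((hb.symm).image (mul_right_injective a))
    simp only [hfdef]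
    rw [h1, dd_image (mul_right_injective a)]
  have hf1 : f 1 = 0 := by simp only [hfdef, image_one_mul, dd_self]
  have hfinv : ∀ a ∈ HS, f a⁻¹ = - f a := by
    intro a ha
    have h0 := hfhom a⁻¹ a (HS.inv_mem ha) ha
    rw [inv_mul_cancel, hf1] at h0
    linarith
  -- elements with zero defect that move Kf off itself lead to a contradiction
  have hTfin : {g : G | ¬ Disjoint ((g * ·) '' (↑Kf : Set G)) (↑Kf : Set G)}.Finite := by
    apply Set.Finite.subset (Set.Finite.image (fun p : G × G => p.2 * p.1⁻¹)
      (hKfin.prod hKfin))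
    intro g hg
    rw [Set.mem_setOf_eq, Set.not_disjoint_iff] at hg
    obtain ⟨v, ⟨k, hk, rfl⟩, hv2⟩ := hg
    exact ⟨(k, g * k), ⟨hk, hv2⟩, by group⟩
  have hker0 : {g : G | g ∈ HS ∧ f g = 0}.Finite := by
    apply hTfin.subset
    rintro g ⟨hgH, hgf⟩
    rw [Set.mem_setOf_eq]
    intro hdisj
    rw [hmemHS] at hgH
    have hginj : Function.Injective (g * ·) := mul_right_injective g
    have hgBB : SDF ((g * ·) '' B) B := hBtrans g hgH
    obtain ⟨k₀, hk₀⟩ := hKne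
    have hgk₀K : g * k₀ ∉ (↑Kf : Set G) :=
      fun h => Set.disjoint_left.mp hdisj ⟨k₀, hk₀, rfl⟩ h
    have hgKsub : ∀ W : Set G, (∀ v ∈ W, ∀ u, InC S (↑Kf) v u → u ∈ W) →
        g * k₀ ∈ W → ∀ k ∈ Kf, g * k ∈ W := by
      intro W hWcl hW k hk
      obtain ⟨p, hp⟩ := hconn k₀ hk₀ k hk
      refine hWcl _ hW _ ⟨p.map (mulHom g), ?_⟩
      intro z hz
      replace hz : z ∈ (p.map (mulHom g)).support := hz
      rw [SimpleGraph.Walk.support_map, List.mem_map] at hz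
      obtain ⟨y, hy, rfl⟩ := hz
      exact fun hmem => Set.disjoint_left.mp hdisj ⟨y, by simpa using hp y hy, rfl⟩ hmem
    have hcovg : ∀ v : G, v ∈ (g * ·) '' (↑Kf : Set G) ∨ v ∈ (g * ·) '' A ∨ v ∈ (g * ·) '' B := by
      intro v
      have hv : v = g * (g⁻¹ * v) := by group
      rcases hcov (g⁻¹ * v) with h | h | h
      · exact Or.inl ⟨_, by simpa using h, hv.symm⟩
      · exact Or.inr (Or.inl ⟨_, h, hv.symm⟩)
      · exact Or.inr (Or.inr ⟨_, h, hv.symm⟩)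
    have hgAB : Disjoint ((g * ·) '' A) ((g * ·) '' B) :=
      Set.disjoint_image_of_injective hginj hAB
    have hgKA : Disjoint ((g * ·) '' (↑Kf : Set G)) ((g * ·) '' A) :=
      Set.disjoint_image_of_injective hginj hKA
    have hgKB : Disjoint ((g * ·) '' (↑Kf : Set G)) ((g * ·) '' B) :=
      Set.disjoint_image_of_injective hginj hKB
    rcases hcov (g * k₀) with hK | hA | hB
    · exact hgk₀K (by simpa using hK)
    · -- gK ⊆ A
      have hgKinA : ∀ k ∈ Kf, g * k ∈ A := hgKsub A hAcl hA
      obtain ⟨b₀, hb₀⟩ := hBinf.nonempty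
      have hb₀reach : ∀ b ∈ B, InC S ((g * ·) '' (↑Kf : Set G)) b₀ b := by
        intro b hb
        obtain ⟨p, hp⟩ := hBconn b₀ hb₀ b hb
        refine ⟨p, fun z hz => ?_⟩
        rintro ⟨k, hk, rfl⟩
        have hzB : g * k ∈ B := hBcl b₀ hb₀ _ (InC.of_support p hp hz)
        exact Set.disjoint_left.mp hAB (hgKinA k (by simpa using hk)) hzB
      rcases hcovg b₀ with h | h | h
      · obtain ⟨k, hk, rfl⟩ := h
        exact Set.disjoint_left.mp hAB (hgKinA k (by simpa using hk)) hb₀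
      · exfalso
        have hBsub : ∀ b ∈ B, b ∈ (g * ·) '' A :=
          fun b hb => image_cl g hAcl b₀ h b (hb₀reach b hb)
        apply hBinf
        apply hgBB.fin₂.subset
        intro b hb
        exact ⟨hb, fun hbgB => Set.disjoint_left.mp hgAB (hBsub b hb) hbgB⟩
      · have hBsub : ∀ b ∈ B, b ∈ (g * ·) '' B :=
          fun b hb => image_cl g hBcl b₀ h b (hb₀reach b hb)
        have hsub1 : ((g * ·) '' A) \ A ⊆ (↑Kf : Set G) := by
          rintro v ⟨hv1, hv2⟩
          rcases hcov v with h' | h' | h'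
          · simpa using h'
          · exact absurd h' hv2
          · exact absurd hv1 (Set.disjoint_left.mp hgAB.symm (hBsub v h'))
        have hsub2 : (g * ·) '' (↑Kf : Set G) ⊆ A \ ((g * ·) '' A) := by
          rintro v ⟨k, hk, rfl⟩
          exact ⟨hgKinA k (by simpa using hk),
            fun h' => Set.disjoint_left.mp hgKA ⟨k, hk, rfl⟩ h'⟩
        have hfin1 : (((g * ·) '' A) \ A).Finite := hgH.fin₁
        have hfin2 : (A \ ((g * ·) '' A)).Finite := hgH.fin₂
        have hncard0 : ((A \ ((g * ·) '' A)).ncard : ℤ) = (((g * ·) '' A) \ A).ncard := by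
          simp only [hfdef, dd] at hgf
          linarith
        have hcK : ((g * ·) '' (↑Kf : Set G)).ncard = (↑Kf : Set G).ncard :=
          Set.ncard_image_of_injective _ hginj
        have hle1 : (↑Kf : Set G).ncard ≤ (A \ ((g * ·) '' A)).ncard := by
          rw [← hcK]; exact Set.ncard_le_ncard hsub2 hfin2
        have hle2 : (((g * ·) '' A) \ A).ncard ≤ (↑Kf : Set G).ncard :=
          Set.ncard_le_ncard hsub1 hKfin
        have hncard0' : (A \ ((g * ·) '' A)).ncard = (((g * ·) '' A) \ A).ncard := by
          exact_mod_cast hncard0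
        have he2 : ((g * ·) '' A) \ A = (↑Kf : Set G) :=
          Set.eq_of_subset_of_ncard_le hsub1 (by omega) hKfin
        have hKgA : ∀ k ∈ Kf, (k : G) ∈ (g * ·) '' A := by
          intro k hk
          have hmem : (k : G) ∈ ((g * ·) '' A) \ A := by
            rw [he2]; simpa using hk
          exact hmem.1
        refine metric_lemma (preconnected hgen) Kf ⟨k₀, hk₀⟩ B A g⁻¹ hKB hKA hAB.symm hBcl
          ?_ ?_ hBinf.nonempty
        · intro b hb
          obtain ⟨b', hb', hbe⟩ := hBsub b hb
          rw [← hbe]; simpa using hb'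
        · intro k hk
          obtain ⟨a', ha', hae⟩ := hKgA k hk
          rw [← hae]; simpa using ha'
    · -- gK ⊆ B
      have hgKinB : ∀ k ∈ Kf, g * k ∈ B := hgKsub B hBcl hB
      obtain ⟨a₀, ha₀⟩ := hAinf.nonempty
      have ha₀reach : ∀ a ∈ A, InC S ((g * ·) '' (↑Kf : Set G)) a₀ a := by
        intro a ha
        obtain ⟨p, hp⟩ := hAconn a₀ ha₀ a ha
        refine ⟨p, fun z hz => ?_⟩
        rintro ⟨k, hk, rfl⟩
        have hzA : g * k ∈ A := hAcl a₀ ha₀ _ (InC.of_support p hp hz)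
        exact Set.disjoint_left.mp hAB hzA (hgKinB k (by simpa using hk))
      rcases hcovg a₀ with h | h | h
      · obtain ⟨k, hk, rfl⟩ := h
        exact Set.disjoint_left.mp hAB ha₀ (hgKinB k (by simpa using hk))
      · -- a₀ ∈ gA : then gA = A
        have hAsub : ∀ a ∈ A, a ∈ (g * ·) '' A :=
          fun a ha => image_cl g hAcl a₀ h a (ha₀reach a ha)
        have hAdiff : A \ ((g * ·) '' A) = ∅ := by
          rw [Set.eq_empty_iff_forall_notMem]
          rintro v ⟨hv1, hv2⟩
          exact hv2 (hAsub v hv1)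
        have hgAdiff : ((g * ·) '' A) \ A = ∅ := by
          have hz : (((g * ·) '' A) \ A).ncard = 0 := by
            have h0 : ((A \ ((g * ·) '' A)).ncard : ℤ) = (((g * ·) '' A) \ A).ncard := by
              simp only [hfdef, dd] at hgf
              linarith
            rw [hAdiff] at h0
            simp only [Set.ncard_empty, Nat.cast_zero] at h0
            exact_mod_cast h0.symm
          exact (Set.ncard_eq_zero hgH.fin₁).mp hz
        have hgAeqA : (g * ·) '' A = A :=
          Set.Subset.antisymm (Set.diff_eq_empty.mp hgAdiff) (fun a ha => hAsub a ha)
        have hKgB : ∀ k ∈ Kf, (k : G) ∈ (g * ·) '' B := by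
          intro k hk
          rcases hcovg k with h' | h' | h'
          · exact absurd (by simpa using hk : (k : G) ∈ (↑Kf : Set G))
              (Set.disjoint_left.mp hdisj h')
          · rw [hgAeqA] at h'
            exact absurd h' (Set.disjoint_left.mp hKA (by simpa using hk))
          · exact h'
        refine metric_lemma (preconnected hgen) Kf ⟨k₀, hk₀⟩ A B g⁻¹ hKA hKB hAB hAcl
          ?_ ?_ hAinf.nonempty
        · intro a ha
          rw [← hgAeqA] at ha
          obtain ⟨a', ha', hae⟩ := ha
          rw [← hae]; simpa using ha'
        · intro k hk
          obtain ⟨b', hb', hbe⟩ := hKgB k hk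
          rw [← hbe]; simpa using hb'
      · exfalso
        have hAsub : ∀ a ∈ A, a ∈ (g * ·) '' B :=
          fun a ha => image_cl g hBcl a₀ h a (ha₀reach a ha)
        apply hAinf
        apply hgH.fin₂.subset
        intro a ha
        exact ⟨ha, fun hagA => Set.disjoint_left.mp hgAB hagA (hAsub a ha)⟩
  -- nontriviality of f on HS
  have hne0 : ∃ g : G, g ∈ HS ∧ f g ≠ 0 := by
    by_contra h
    push_neg at h
    have hHfin : Finite HS := by
      have hsub : ((HS : Set G)).Finite := by
        apply hker0.subset
        intro g hg
        exact ⟨hg, h g hg⟩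
      exact hsub.to_subtype
    have hidx0 : HS.index ≠ 0 := by rcases hindex with h' | h' <;> simp [h']
    have hcard : Nat.card G ≠ 0 := by
      rw [← Subgroup.index_mul_card HS]
      have h2 : Nat.card HS ≠ 0 :=
        Nat.card_ne_zero.mpr ⟨⟨⟨1, HS.one_mem⟩⟩, hHfin⟩
      exact mul_ne_zero hidx0 h2
    have hGfin : Finite G := (Nat.card_pos_iff.mp (Nat.pos_of_ne_zero hcard)).2
    exact absurd hGfin (by simp [not_finite_iff_infinite]; infer_instance)
  -- the range of f on HS is a subgroup of ℤ
  set R : AddSubgroup ℤ := {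
    carrier := {n : ℤ | ∃ g ∈ HS, f g = n}
    zero_mem' := ⟨1, HS.one_mem, hf1⟩
    add_mem' := by
      rintro x y ⟨gx, hgx, rfl⟩ ⟨gy, hgy, rfl⟩
      exact ⟨gx * gy, HS.mul_mem hgx hgy, hfhom gx gy hgx hgy⟩
    neg_mem' := by
      rintro x ⟨gx, hgx, rfl⟩
      exact ⟨gx⁻¹, HS.inv_mem hgx, hfinv gx hgx⟩ } with hRdef
  obtain ⟨a, hRa⟩ := Int.subgroup_cyclic R
  rw [← AddSubgroup.zmultiples_eq_closure] at hRa
  have ha0 : a ≠ 0 := by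
    rintro rfl
    obtain ⟨g, hg, hgne⟩ := hne0
    have hmem : f g ∈ R := ⟨g, hg, rfl⟩
    rw [hRa] at hmem
    obtain ⟨k, hk⟩ := AddSubgroup.mem_zmultiples_iff.mp hmem
    simp only [smul_zero] at hk
    exact hgne hk.symm
  have hdvd : ∀ g ∈ HS, a ∣ f g := by
    intro g hg
    have hmem : f g ∈ R := ⟨g, hg, rfl⟩
    rw [hRa] at hmem
    obtain ⟨k, hk⟩ := AddSubgroup.mem_zmultiples_iff.mp hmem
    exact ⟨k, by rw [← hk, zsmul_eq_mul]; push_cast; ring⟩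
  have haR : a ∈ R := by
    rw [hRa]
    exact AddSubgroup.mem_zmultiples a
  obtain ⟨g₀, hg₀H, hg₀⟩ := haR
  -- the normalized homomorphism
  have hmapmul : ∀ x y : HS,
      Multiplicative.ofAdd (f ((x * y : HS) : G) / a) =
        Multiplicative.ofAdd (f (x : G) / a) * Multiplicative.ofAdd (f (y : G) / a) := by
    intro x y
    obtain ⟨cx, hcx⟩ := hdvd x.1 x.2
    obtain ⟨cy, hcy⟩ := hdvd y.1 y.2
    rw [← ofAdd_add]
    congr 1
    have hxy : f ((x * y : HS) : G) = f (x : G) + f (y : G) := hfhom _ _ x.2 y.2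
    rw [hxy, hcx, hcy, ← mul_add, Int.mul_ediv_cancel_left _ ha0,
      Int.mul_ediv_cancel_left _ ha0, Int.mul_ediv_cancel_left _ ha0]
  set φ : HS →* Multiplicative ℤ :=
    MonoidHom.mk' (fun h => Multiplicative.ofAdd (f (h : G) / a)) hmapmul with hφdef
  -- auxiliary unnormalized hom, for computing powers
  set φ₀ : HS →* Multiplicative ℤ :=
    MonoidHom.mk' (fun h => Multiplicative.ofAdd (f (h : G)))
      (fun x y => by
        rw [← ofAdd_add]
        congr 1
        exact hfhom _ _ x.2 y.2) with hφ₀def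
  have hpow : ∀ m : ℤ, f (((⟨g₀, hg₀H⟩ : HS) ^ m : HS) : G) = m * a := by
    intro m
    have h1 : φ₀ ((⟨g₀, hg₀H⟩ : HS) ^ m) = (φ₀ (⟨g₀, hg₀H⟩ : HS)) ^ m := map_zpow φ₀ _ m
    have h2 : Multiplicative.toAdd (φ₀ ((⟨g₀, hg₀H⟩ : HS) ^ m)) = f (((⟨g₀, hg₀H⟩ : HS) ^ m : HS) : G) := rfl
    rw [← h2, h1]
    show Multiplicative.toAdd ((Multiplicative.ofAdd (f g₀)) ^ m) = m * a
    rw [hg₀]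
    rw [← ofAdd_zsmul, toAdd_ofAdd, zsmul_eq_mul]
    push_cast
    ring
  refine ⟨HS, hindex, φ, ?_, ?_⟩
  · intro n
    refine ⟨(⟨g₀, hg₀H⟩ : HS) ^ (Multiplicative.toAdd n), ?_⟩
    show Multiplicative.ofAdd (f (((⟨g₀, hg₀H⟩ : HS) ^ (Multiplicative.toAdd n) : HS) : G) / a) = n
    rw [hpow, Int.mul_ediv_cancel _ ha0]
    exact ofAdd_toAdd n
  · -- kernel of φ is finite
    have hkerchar : ∀ x : HS, x ∈ φ.ker → f (x : G) = 0 := by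
      intro x hx
      have h1 : Multiplicative.ofAdd (f (x : G) / a) = 1 := hx
      have h2 : f (x : G) / a = 0 := by
        have := congrArg Multiplicative.toAdd h1
        simpa using this
      obtain ⟨c, hc⟩ := hdvd x.1 x.2
      rw [hc, Int.mul_ediv_cancel_left _ ha0] at h2
      rw [hc, h2, mul_zero]
    have hfinset : Finite ↥{g : G | g ∈ HS ∧ f g = 0} := hker0.to_subtype
    refine Finite.of_injective
      (fun x : φ.ker => (⟨x.1.1, ⟨x.1.2, hkerchar x.1 x.2⟩⟩ :
        ↥{g : G | g ∈ HS ∧ f g = 0})) ?_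
    intro x y hxy
    apply Subtype.ext
    apply Subtype.ext
    simpa using congrArg Subtype.val hxy

end St17

/-- A finitely generated two-ended group `G` has a subgroup `H` of index at most `2`
admitting a surjective homomorphism onto `ℤ` with finite kernel; consequently `G`
contains a subgroup of index exactly `2`. -/
theorem stmt_17 {G : Type*} [Group G] (S : Set G) (hfin : S.Finite)
    (hgen : Subgroup.closure S = ⊤)
    (htwo : HasExactlyTwoEnds (cayleyGraph G S)) :
    (∃ H : Subgroup G, (H.index = 1 ∨ H.index = 2) ∧
      ∃ φ : H →* Multiplicative ℤ, Function.Surjective φ ∧ Finite φ.ker) ∧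
    (∃ K : Subgroup G, K.index = 2) := by
  classical
  have htwo' := htwo
  obtain ⟨e₁, e₂, hne, hall⟩ := htwo'
  haveI : Infinite G := St17.infinite_of_end e₁
  obtain ⟨P⟩ := St17.exists_pack hfin hgen htwo
  obtain ⟨H, hHidx, φ, hφsurj, hφker⟩ := St17.main hfin hgen P
  refine ⟨⟨H, hHidx, φ, hφsurj, hφker⟩, ?_⟩
  rcases hHidx with h1 | h2
  · have htop : H = ⊤ := Subgroup.index_eq_one.mp h1
    set e : G ≃* H :=
      ((Subgroup.topEquiv (G := G)).symm.trans (MulEquiv.subgroupCongr htop.symm)) with he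
    set ψ : G →* Multiplicative ℤ := φ.comp e.toMonoidHom with hψdef
    have hψ : Function.Surjective ψ := hφsurj.comp e.surjective
    set Z2 : Subgroup (Multiplicative ℤ) :=
      AddSubgroup.toSubgroup (AddSubgroup.zmultiples (2 : ℤ)) with hZ2
    refine ⟨Subgroup.comap ψ Z2, ?_⟩
    rw [Subgroup.index_comap_of_surjective _ hψ, hZ2, AddSubgroup.index_toSubgroup,
      Int.index_zmultiples]
    rfl
  · exact ⟨H, h2⟩
end

section
/- In the group G = ⟨a, b, c ∣ a², b², c², (ab)², (abc)^m⟩ with m ≥ 2, the element ac has infinite order. -/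
/-- The relators of the presentation `⟨a, b, c ∣ a², b², c², (ab)², (abc)^m⟩`. -/
def rels (m : ℕ) : Set (FreeGroup (Fin 3)) :=
  { (FreeGroup.of 0) ^ 2, (FreeGroup.of 1) ^ 2, (FreeGroup.of 2) ^ 2,
    (FreeGroup.of 0 * FreeGroup.of 1) ^ 2,
    (FreeGroup.of 0 * FreeGroup.of 1 * FreeGroup.of 2) ^ m }

noncomputable section AuxPerms

open Complex

/-- `w ↦ 1 - w`, rotation by π about 1/2. -/
noncomputable def pA : Equiv.Perm ℂ :=
  Function.Involutive.toPerm (fun w => 1 - w) (fun w => by ring)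

/-- `w ↦ 1 - conj w`. -/
noncomputable def pB : Equiv.Perm ℂ :=
  Function.Involutive.toPerm (fun w => 1 - (starRingEnd ℂ) w) (fun w => by simp)

/-- `w ↦ ζ⁻¹ * conj w`. -/
noncomputable def pC (ζ : ℂ) (hζ : ζ ≠ 0) : Equiv.Perm ℂ where
  toFun w := ζ⁻¹ * (starRingEnd ℂ) w
  invFun w := (starRingEnd ℂ) (ζ * w)
  left_inv w := by
    show (starRingEnd ℂ) (ζ * (ζ⁻¹ * (starRingEnd ℂ) w)) = w
    rw [← mul_assoc, mul_inv_cancel₀ hζ, one_mul, Complex.conj_conj]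
  right_inv w := by
    simp only [map_mul, Complex.conj_conj]
    rw [← mul_assoc, inv_mul_cancel₀ hζ, one_mul]

@[simp] lemma pA_apply (w : ℂ) : pA w = 1 - w := rfl
@[simp] lemma pB_apply (w : ℂ) : pB w = 1 - (starRingEnd ℂ) w := rfl
@[simp] lemma pC_apply (ζ : ℂ) (hζ : ζ ≠ 0) (w : ℂ) :
    pC ζ hζ w = ζ⁻¹ * (starRingEnd ℂ) w := rfl

lemma key_not_finorder (ζ : ℂ) (hζ0 : ζ ≠ 0)
    (hconj : (starRingEnd ℂ) ζ = ζ⁻¹) (hne1 : ζ ≠ 1) :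
    ¬ IsOfFinOrder (pA * pC ζ hζ0) := by
  intro h
  obtain ⟨n, hn, hpow⟩ := isOfFinOrder_iff_pow_eq_one.mp h
  have hconj' : (starRingEnd ℂ) ζ⁻¹ = ζ := by
    rw [map_inv₀, hconj, inv_inv]
  have hsq : ∀ w, ((pA * pC ζ hζ0) ^ 2) w = w + (1 - ζ⁻¹) := by
    intro w
    rw [sq, Equiv.Perm.mul_apply, Equiv.Perm.mul_apply, Equiv.Perm.mul_apply]
    simp only [pA_apply, pC_apply, map_sub, map_one, map_mul, hconj',
      Complex.conj_conj]
    rw [mul_sub, ← mul_assoc, inv_mul_cancel₀ hζ0]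
    ring
  have hiter : ∀ (k : ℕ) (w : ℂ), ((pA * pC ζ hζ0) ^ (2 * k)) w = w + (k : ℂ) * (1 - ζ⁻¹) := by
    intro k
    induction k with
    | zero => intro w; simp
    | succ k ih =>
      intro w
      have : 2 * (k + 1) = 2 * k + 2 := by ring
      rw [this, pow_add, Equiv.Perm.mul_apply, hsq w, ih]
      push_cast
      ring
  have h2n : ((pA * pC ζ hζ0) ^ (2 * n)) 0 = 0 := by
    rw [mul_comm 2 n, pow_mul, hpow, one_pow]
    rfl
  rw [hiter n 0, zero_add] at h2n
  rcases mul_eq_zero.mp h2n with h | h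
  · exact (Nat.cast_ne_zero.mpr hn.ne').elim (by exact_mod_cast h)
  · apply hne1
    have : ζ⁻¹ = 1 := by linear_combination -h
    rw [← inv_inv ζ, this, inv_one]

end AuxPerms

/-- In `G = ⟨a, b, c ∣ a², b², c², (ab)², (abc)^m⟩` with `m ≥ 2`, the element `ac`
has infinite order. -/
theorem stmt_18 (m : ℕ) (hm : 2 ≤ m) :
    ¬ IsOfFinOrder ((PresentedGroup.of 0 : PresentedGroup (rels m)) *
      PresentedGroup.of 2) := by
  classical
  have hm0 : (m : ℂ) ≠ 0 := Nat.cast_ne_zero.mpr (by omega)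
  set ζ : ℂ := Complex.exp (((2 * Real.pi / m : ℝ) : ℂ) * Complex.I) with hζdef
  have hζ0 : ζ ≠ 0 := Complex.exp_ne_zero _
  have hconj : (starRingEnd ℂ) ζ = ζ⁻¹ := by
    rw [hζdef, ← Complex.exp_conj, ← Complex.exp_neg]
    congr 1
    rw [map_mul, Complex.conj_ofReal, Complex.conj_I]
    ring
  have hpowm : ζ ^ m = 1 := by
    rw [hζdef, ← Complex.exp_nat_mul]
    rw [show (m : ℂ) * (((2 * Real.pi / m : ℝ) : ℂ) * Complex.I)
        = 2 * Real.pi * Complex.I by push_cast; field_simp]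
    exact Complex.exp_two_pi_mul_I
  have hne1 : ζ ≠ 1 := by
    intro hone
    rw [hζdef, Complex.exp_eq_one_iff] at hone
    obtain ⟨k, hk⟩ := hone
    have hI : (Complex.I : ℂ) ≠ 0 := Complex.I_ne_zero
    have hpi : (2 * Real.pi : ℝ) ≠ 0 := by positivity
    have h1 : ((2 * Real.pi / m : ℝ) : ℂ) = (k : ℂ) * (2 * Real.pi) := by
      field_simp at hk ⊢
      rw [mul_comm] at hk
      push_cast at hk ⊢
      linear_combination hk
    have h2 : (2 * Real.pi / m : ℝ) = (k : ℝ) * (2 * Real.pi) := by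
      exact_mod_cast h1
    have hmpos : (0 : ℝ) < m := by positivity
    rw [div_eq_iff hmpos.ne'] at h2
    have h3 : (k : ℝ) * m = 1 := by nlinarith [Real.pi_pos]
    have h4 : (k : ℤ) * m = 1 := by exact_mod_cast h3
    have h5 : ((m : ℤ)) ∣ 1 := ⟨k, by linear_combination -h4⟩
    have h6 := Int.le_of_dvd one_pos h5
    omega
  -- the concrete representation
  set f : Fin 3 → Equiv.Perm ℂ := ![pA, pB, pC ζ hζ0] with hf
  have hrels : ∀ r ∈ rels m, FreeGroup.lift f r = 1 := by
    intro r hr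
    have hf0 : FreeGroup.lift f (FreeGroup.of (0 : Fin 3)) = pA := by simp [hf]
    have hf1 : FreeGroup.lift f (FreeGroup.of (1 : Fin 3)) = pB := by simp [hf]
    have hf2 : FreeGroup.lift f (FreeGroup.of (2 : Fin 3)) = pC ζ hζ0 := by simp [hf]
    rcases hr with h | h | h | h | h
    · subst h
      rw [map_pow, hf0]
      ext w
      rw [sq, Equiv.Perm.mul_apply]
      simp
    · subst h
      rw [map_pow, hf1]
      ext w
      rw [sq, Equiv.Perm.mul_apply]
      simp
    · subst h
      rw [map_pow, hf2]
      ext w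
      rw [sq, Equiv.Perm.mul_apply]
      simp only [pC_apply, map_mul, map_inv₀, hconj, inv_inv, Complex.conj_conj,
        Equiv.Perm.one_apply]
      rw [← mul_assoc, inv_mul_cancel₀ hζ0, one_mul]
    · subst h
      rw [map_pow, map_mul, hf0, hf1]
      ext w
      rw [sq, Equiv.Perm.mul_apply, Equiv.Perm.mul_apply, Equiv.Perm.mul_apply]
      simp
    · rw [Set.mem_singleton_iff] at h
      subst h
      rw [map_pow, map_mul, map_mul, hf0, hf1, hf2]
      have habc : ∀ w, (pA * pB * pC ζ hζ0) w = ζ * w := by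
        intro w
        rw [Equiv.Perm.mul_apply, Equiv.Perm.mul_apply]
        simp only [pC_apply, pB_apply, pA_apply, map_sub, map_one, map_mul,
          map_inv₀, hconj, inv_inv, Complex.conj_conj]
        ring
      have hpow : ∀ (k : ℕ) (w : ℂ), ((pA * pB * pC ζ hζ0) ^ k) w = ζ ^ k * w := by
        intro k
        induction k with
        | zero => intro w; simp
        | succ k ih =>
          intro w
          rw [pow_succ, Equiv.Perm.mul_apply, habc w, ih, pow_succ]
          ring
      ext w
      rw [hpow m w, hpowm, one_mul]
      rfl
  let φ : PresentedGroup (rels m) →* Equiv.Perm ℂ := PresentedGroup.toGroup hrels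
  intro hfin
  have hmap : IsOfFinOrder (φ ((PresentedGroup.of 0 : PresentedGroup (rels m)) *
      PresentedGroup.of 2)) := φ.isOfFinOrder hfin
  rw [map_mul, PresentedGroup.toGroup.of, PresentedGroup.toGroup.of] at hmap
  have : φ.toFun = φ := rfl
  have hAC : f 0 * f 2 = pA * pC ζ hζ0 := by simp [hf]
  rw [hAC] at hmap
  exact key_not_finorder ζ hζ0 hconj hne1 hmap
end
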